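/- arXiv:2503.07581 — 3 statements merged into one kernel-verified Lean document; each statement's English description precedes it below -/
import Mathlib

section
/- The center of the group algebra F[B] contains exactly two primitive idempotents; equivalently, F[B] has exactly two blocks. -/
noncomputable section

open Matrix MvPolynomial

/-- `SL₂(𝔽_p)`. -/
abbrev SL2 (p : ℕ) : Type := Matrix.SpecialLinearGroup (Fin 2) (ZMod p)

/-- The subgroup of upper triangular matrices of `SL₂(𝔽_p)`. -/
def UT (p : ℕ) : Subgroup (SL2 p) where
  carrier := {M | (M : Matrix (Fin 2) (Fin 2) (ZMod p)) 1 0 = 0}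
  one_mem' := by simp
  mul_mem' := by
    intro a b ha hb
    simp only [Set.mem_setOf_eq] at *
    simp [Matrix.SpecialLinearGroup.coe_mul, Matrix.mul_apply, Fin.sum_univ_two, ha, hb]
  inv_mem' := by
    intro a ha
    simp only [Set.mem_setOf_eq] at *
    rw [Matrix.SpecialLinearGroup.SL2_inv_expl]
    simp [ha]

variable (p : ℕ) (F : Type) [Field F] [CharP F p]

/-- The canonical embedding `𝔽_p → F` for `F` of characteristic `p`. -/
def fpCast : ZMod p →+* F := ZMod.castHom dvd_rfl F

/-- The character of `B` sending an upper triangular matrix to `d^a`,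
where `d` is its upper-left entry. -/
def chi (a : ℕ) : UT p →* F where
  toFun b := (fpCast p F (((b : SL2 p) : Matrix (Fin 2) (Fin 2) (ZMod p)) 0 0)) ^ a
  map_one' := by simp
  map_mul' := by
    intro b c
    have hc : ((c : SL2 p) : Matrix (Fin 2) (Fin 2) (ZMod p)) 1 0 = 0 := c.2
    have : (((b * c : UT p) : SL2 p) : Matrix (Fin 2) (Fin 2) (ZMod p)) 0 0
        = ((b : SL2 p) : Matrix (Fin 2) (Fin 2) (ZMod p)) 0 0 *
          ((c : SL2 p) : Matrix (Fin 2) (Fin 2) (ZMod p)) 0 0 := by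
      simp [Matrix.SpecialLinearGroup.coe_mul, Matrix.mul_apply, Fin.sum_univ_two, hc]
    show (fpCast p F) ((((b * c : UT p) : SL2 p) : Matrix (Fin 2) (Fin 2) (ZMod p)) 0 0) ^ a = _
    rw [this, _root_.map_mul, mul_pow]

/-- The one-dimensional representation of `B` on `F` given by the character `chi p F a`. -/
def Srep (a : ℕ) : Representation F (UT p) F where
  toFun b := chi p F a b • (1 : F →ₗ[F] F)
  map_one' := by simp
  map_mul' := by
    intro b c
    ext
    simp [mul_smul, mul_comm]

/-- The module `S_a`: the one-dimensional module over `F[B]` on which an upper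
triangular matrix acts as multiplication by `d^a`, `d` being its upper-left entry. -/
def S (a : ℕ) : Type := (Srep p F a).asModule

instance (a : ℕ) : AddCommGroup (S p F a) :=
  inferInstanceAs (AddCommGroup (Srep p F a).asModule)

instance (a : ℕ) : Module (MonoidAlgebra F (UT p)) (S p F a) :=
  inferInstanceAs (Module (MonoidAlgebra F (UT p)) (Srep p F a).asModule)

instance (a : ℕ) : Module F (S p F a) :=
  inferInstanceAs (Module F (Srep p F a).asModule)

/-- The algebra endomorphism of `F[x,y]` substituting `X i ↦ ∑ j, g i j • X j`,
i.e. `x ↦ αx + βy`, `y ↦ γx + δy` for `g = [[α,β],[γ,δ]]`. -/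
def substAux (g : SL2 p) : MvPolynomial (Fin 2) F →ₐ[F] MvPolynomial (Fin 2) F :=
  aeval (fun i => ∑ j, C (fpCast p F ((g : Matrix (Fin 2) (Fin 2) (ZMod p)) i j)) * X j)

lemma substAux_mem (g : SL2 p) (n : ℕ) {φ : MvPolynomial (Fin 2) F}
    (h : φ ∈ homogeneousSubmodule (Fin 2) F n) :
    substAux p F g φ ∈ homogeneousSubmodule (Fin 2) F n := by
  rw [mem_homogeneousSubmodule] at h ⊢
  have hg : ∀ i : Fin 2, MvPolynomial.IsHomogeneous
      (∑ j, C (fpCast p F ((g : Matrix (Fin 2) (Fin 2) (ZMod p)) i j)) * X j) 1 := by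
    intro i
    apply Finset.sum_induction _ (fun q => MvPolynomial.IsHomogeneous q 1)
    · exact fun a b ha hb => ha.add hb
    · exact isHomogeneous_zero _ _ _
    · intro j _
      simpa using (isHomogeneous_C _ _).mul (isHomogeneous_X _ _)
  have h2 := h.aeval (n := 1) _ hg
  rwa [one_mul] at h2

lemma substAux_comp (g h : SL2 p) :
    (substAux p F g).comp (substAux p F h) = substAux p F (h * g) := by
  apply MvPolynomial.algHom_ext
  intro i
  simp [substAux, MvPolynomial.aeval_X, Finset.mul_sum, Matrix.SpecialLinearGroup.coe_mul,
    Matrix.mul_apply, Fin.sum_univ_two, map_add, _root_.map_mul, mul_add, add_mul]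
  ring

/-- The representation of `G = SL₂(𝔽_p)` on the space of homogeneous polynomials of
degree `n` in `F[x,y]`: the monomial `x^i y^j` is sent by `g = [[α,β],[γ,δ]]` to
`(αx+βy)^i (γx+δy)^j` (as a right action; the corresponding left action is via `g⁻¹`). -/
def Vrep (n : ℕ) : Representation F (SL2 p) (homogeneousSubmodule (Fin 2) F n) where
  toFun g := ((substAux p F g⁻¹).toLinearMap).restrict
    (fun φ hφ => substAux_mem p F g⁻¹ n hφ)
  map_one' := by
    have h1 : substAux p F (1 : SL2 p) = AlgHom.id F _ := by
      apply MvPolynomial.algHom_ext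
      intro i
      fin_cases i <;>
        simp [substAux, MvPolynomial.aeval_X, Matrix.one_apply, Fin.sum_univ_two]
    apply LinearMap.ext; intro φ
    refine Subtype.ext ?_
    show substAux p F (1 : SL2 p)⁻¹ (φ : MvPolynomial (Fin 2) F) = (φ : MvPolynomial (Fin 2) F)
    rw [inv_one, h1]; rfl
  map_mul' := by
    intro g h
    apply LinearMap.ext; intro φ
    refine Subtype.ext ?_
    show substAux p F (g * h)⁻¹ (φ : MvPolynomial (Fin 2) F)
        = substAux p F g⁻¹ (substAux p F h⁻¹ (φ : MvPolynomial (Fin 2) F))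
    rw [_root_.mul_inv_rev, ← AlgHom.comp_apply, substAux_comp]

/-- The module `V_t`: the space of homogeneous polynomials of degree `t-1` in `F[x,y]`,
as a module over `F[G]` for `G = SL₂(𝔽_p)`. -/
def V (t : ℕ) : Type := (Vrep p F (t - 1)).asModule

instance (t : ℕ) : AddCommGroup (V p F t) :=
  inferInstanceAs (AddCommGroup (Vrep p F (t - 1)).asModule)

instance (t : ℕ) : Module (MonoidAlgebra F (SL2 p)) (V p F t) :=
  inferInstanceAs (Module (MonoidAlgebra F (SL2 p)) (Vrep p F (t - 1)).asModule)

instance (t : ℕ) : Module F (V p F t) :=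
  inferInstanceAs (Module F (Vrep p F (t - 1)).asModule)

/-- The restriction of the `F[G]`-module `V_t` to an `F[B]`-module,
for `B` the subgroup of upper triangular matrices. -/
def VrepB (t : ℕ) : Representation F (UT p) (homogeneousSubmodule (Fin 2) F (t - 1)) :=
  (Vrep p F (t - 1)).comp (UT p).subtype

def VB (t : ℕ) : Type := (VrepB p F t).asModule

instance (t : ℕ) : AddCommGroup (VB p F t) :=
  inferInstanceAs (AddCommGroup (VrepB p F t).asModule)

instance (t : ℕ) : Module (MonoidAlgebra F (UT p)) (VB p F t) :=
  inferInstanceAs (Module (MonoidAlgebra F (UT p)) (VrepB p F t).asModule)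

instance (t : ℕ) : Module F (VB p F t) :=
  inferInstanceAs (Module F (VrepB p F t).asModule)

/-- A module is uniserial if its submodules are totally ordered by inclusion. -/
def IsUniserial (R M : Type*) [Ring R] [AddCommGroup M] [Module R M] : Prop :=
  ∀ A B : Submodule R M, A ≤ B ∨ B ≤ A

/-- A module is indecomposable if it is not the internal direct sum of two nonzero
submodules. (Nontriviality is imposed separately.) -/
def IsIndecomposable (R M : Type*) [Ring R] [AddCommGroup M] [Module R M] : Prop :=
  ∀ A B : Submodule R M, IsCompl A B → A = ⊥ ∨ B = ⊥

/-- A primitive idempotent of a commutative ring: a nonzero idempotent `e` which cannot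
be written as `e = f + g` with `f`, `g` nonzero orthogonal idempotents. -/
def IsPrimitiveIdempotent {A : Type*} [CommRing A] (e : A) : Prop :=
  e ≠ 0 ∧ IsIdempotentElem e ∧
    ∀ f g : A, IsIdempotentElem f → IsIdempotentElem g → f * g = 0 → e = f + g →
      f = 0 ∨ g = 0


/-- The set of relations defining the balanced tensor product
`F[G] ⊗_{F[B]} S_a` as a quotient of `F[G] ⊗_F S_a`: for `b ∈ B` and `s ∈ S_a`,
the element `(ι b) ⊗ s - 1 ⊗ (b • s)`. -/
def indRelSet (a : ℕ) : Set (TensorProduct F (MonoidAlgebra F (SL2 p)) (S p F a)) :=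
  {z | ∃ (b : UT p) (s : S p F a),
    z = (MonoidAlgebra.of F (SL2 p) (b : SL2 p)) ⊗ₜ[F] s -
        (1 : MonoidAlgebra F (SL2 p)) ⊗ₜ[F] ((MonoidAlgebra.of F (UT p) b) • s)}

/-- The `F[G]`-submodule of relations for the balanced tensor product. -/
def indRel (a : ℕ) : Submodule (MonoidAlgebra F (SL2 p)) (TensorProduct F (MonoidAlgebra F (SL2 p)) (S p F a)) :=
  Submodule.span _ (indRelSet p F a)

/-- The induced module `Ind_B^G(S_a) = F[G] ⊗_{F[B]} S_a`, realised as the quotient of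
`F[G] ⊗_F S_a` by the submodule of balancing relations. -/
abbrev Ind (a : ℕ) : Type :=
  TensorProduct F (MonoidAlgebra F (SL2 p)) (S p F a) ⧸ indRel p F a

end

noncomputable section
namespace Scratch

variable {p : ℕ}

/-- entry of an element of `UT p`. -/
def ent (g : UT p) (i j : Fin 2) : ZMod p := ((g : SL2 p) : Matrix (Fin 2) (Fin 2) (ZMod p)) i j

lemma ent_lo (g : UT p) : ent g 1 0 = 0 := g.2

lemma ent_det (g : UT p) : ent g 0 0 * ent g 1 1 = 1 := by
  have h := (g : SL2 p).2
  rw [Matrix.det_fin_two] at h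
  have := ent_lo g
  unfold ent at *
  rw [this] at h; linear_combination h

def um (t : ZMod p) : UT p :=
  ⟨⟨!![1, t; 0, 1], by simp [Matrix.det_fin_two]⟩, by show (_ : Matrix _ _ _) 1 0 = 0; simp⟩

def tm (d : (ZMod p)ˣ) : UT p :=
  ⟨⟨!![(d : ZMod p), 0; 0, ((d⁻¹ : (ZMod p)ˣ) : ZMod p)], by
      simp [Matrix.det_fin_two]⟩, by show (_ : Matrix _ _ _) 1 0 = 0; simp⟩

lemma um_mul (a b : ZMod p) : um a * um b = um (a + b) := by
  apply Subtype.ext; apply Subtype.ext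
  rw [Subgroup.coe_mul, Matrix.SpecialLinearGroup.coe_mul]
  simp only [um]
  ext i j
  fin_cases i <;> fin_cases j <;> simp [Matrix.mul_apply, Fin.sum_univ_two] <;> ring

lemma um_zero : (um 0 : UT p) = 1 := by
  apply Subtype.ext; apply Subtype.ext
  rw [OneMemClass.coe_one, Matrix.SpecialLinearGroup.coe_one]
  simp only [um]
  ext i j; fin_cases i <;> fin_cases j <;> simp [Matrix.one_apply]


lemma um_pow (n : ℕ) : (um (1 : ZMod p)) ^ n = um (n : ZMod p) := by
  induction n with
  | zero => simpa using um_zero.symm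
  | succ k ih => rw [pow_succ, ih, um_mul]; push_cast; ring_nf

lemma ent_tm_um (d : (ZMod p)ˣ) (k : ZMod p) :
    ((tm d * um k : UT p) : SL2 p) = (⟨!![(d : ZMod p), (d : ZMod p) * k; 0, ((d⁻¹ : (ZMod p)ˣ) : ZMod p)], by simp [Matrix.det_fin_two]⟩ : SL2 p) := by
  apply Subtype.ext
  rw [Subgroup.coe_mul, Matrix.SpecialLinearGroup.coe_mul]
  simp only [tm, um]
  ext i j
  fin_cases i <;> fin_cases j <;> simp [Matrix.mul_apply, Fin.sum_univ_two]

lemma um_tm (t : ZMod p) (d : (ZMod p)ˣ) :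
    um t * tm d = tm d * um (t * ((d⁻¹ : (ZMod p)ˣ) : ZMod p) * ((d⁻¹ : (ZMod p)ˣ) : ZMod p)) := by
  apply Subtype.ext; apply Subtype.ext
  rw [Subgroup.coe_mul, Subgroup.coe_mul, Matrix.SpecialLinearGroup.coe_mul,
    Matrix.SpecialLinearGroup.coe_mul]
  simp only [tm, um]
  ext i j
  fin_cases i <;> fin_cases j <;>
    simp [Matrix.mul_apply, Fin.sum_univ_two] <;>
    linear_combination (-(t * ((d⁻¹ : (ZMod p)ˣ) : ZMod p))) * d.mul_inv


lemma ent_tm_um00 (d : (ZMod p)ˣ) (k : ZMod p) : ent (tm d * um k) 0 0 = d := by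
  unfold ent; rw [ent_tm_um]; simp

lemma ent_tm_um01 (d : (ZMod p)ˣ) (k : ZMod p) : ent (tm d * um k) 0 1 = (d : ZMod p) * k := by
  unfold ent; rw [ent_tm_um]; simp

lemma ent_tm_um11 (d : (ZMod p)ˣ) (k : ZMod p) :
    ent (tm d * um k) 1 1 = ((d⁻¹ : (ZMod p)ˣ) : ZMod p) := by
  unfold ent; rw [ent_tm_um]; simp

/-- the unit given by the diagonal of `g`. -/
def unitOf (g : UT p) : (ZMod p)ˣ :=
  ⟨ent g 0 0, ent g 1 1, ent_det g, by rw [mul_comm]; exact ent_det g⟩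

/-- the parametrisation of `UT p`. -/
def E : ((ZMod p)ˣ × ZMod p) ≃ UT p where
  toFun x := tm x.1 * um x.2
  invFun g := (unitOf g, ent g 0 1 * ent g 1 1)
  left_inv := by
    rintro ⟨d, k⟩
    refine Prod.ext (Units.ext ?_) ?_
    · show ent (tm d * um k) 0 0 = (d : ZMod p)
      exact ent_tm_um00 d k
    · show ent (tm d * um k) 0 1 * ent (tm d * um k) 1 1 = k
      rw [ent_tm_um01, ent_tm_um11, mul_comm (d:ZMod p) k, mul_assoc]
      simp
  right_inv := by
    intro g
    have h10 := ent_lo g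
    have hdet := ent_det g
    apply Subtype.ext; apply Subtype.ext
    rw [ent_tm_um]
    show _ = ((g : SL2 p) : Matrix (Fin 2) (Fin 2) (ZMod p))
    ext i j
    fin_cases i <;> fin_cases j <;>
      simp [unitOf, ent] at h10 hdet ⊢
    · show ent g 0 0 * (ent g 0 1 * ent g 1 1) = ent g 0 1
      rw [mul_comm (ent g 0 1), ← mul_assoc, ent_det g, one_mul]
    · exact h10.symm

lemma inv_um (t : ZMod p) : (um t)⁻¹ = um (-t) := by
  rw [eq_comm]
  apply eq_inv_of_mul_eq_one_left
  rw [um_mul, neg_add_cancel, um_zero]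

lemma conj_tm_um (t : ZMod p) (d : (ZMod p)ˣ) (k : ZMod p) :
    um t * (tm d * um k) * (um t)⁻¹ =
      tm d * um (k + t * (((d⁻¹ : (ZMod p)ˣ) : ZMod p) * ((d⁻¹ : (ZMod p)ˣ) : ZMod p) - 1)) := by
  rw [inv_um]
  have : um t * (tm d * um k) * um (-t) = (um t * tm d) * (um k * um (-t)) := by group
  rw [this, um_tm, um_mul, mul_assoc, um_mul]
  congr 1
  ring


section Alg

variable (p : ℕ) (F : Type) [Field F] [CharP F p]

open MonoidAlgebra Finset

abbrev R' : Type := MonoidAlgebra F (UT p)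

/-- the two relevant central characters of `F[B]`. -/
def Om (a : ℕ) : MonoidAlgebra F (UT p) →ₐ[F] F :=
  MonoidAlgebra.lift F F (UT p) (chi p F a)

lemma Om_single (a : ℕ) (g : UT p) (c : F) :
    Om p F a (MonoidAlgebra.single g c) = c * chi p F a g := by
  rw [Om, MonoidAlgebra.lift_single, smul_eq_mul]

lemma chi_apply (a : ℕ) (g : UT p) : chi p F a g = (fpCast p F (ent g 0 0)) ^ a := rfl

lemma charP_R : CharP (MonoidAlgebra F (UT p)) p := by
  have hinj : Function.Injective (MonoidAlgebra.singleOneRingHom :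
      F →+* MonoidAlgebra F (UT p)) := by
    intro a b hab
    have := congrArg (fun z : MonoidAlgebra F (UT p) => z.coeff 1) hab
    simpa [MonoidAlgebra.singleOneRingHom] using this
  exact charP_of_injective_ringHom hinj p

lemma coeff_conj {x : MonoidAlgebra F (UT p)} (hx : x ∈ Subring.center (MonoidAlgebra F (UT p)))
    (h g : UT p) : x.coeff (h * g * h⁻¹) = x.coeff g := by
  have hc := Subring.mem_center_iff.mp hx (MonoidAlgebra.single h 1)
  have h2 := congrArg (fun z : MonoidAlgebra F (UT p) => z.coeff (h * g)) hc
  simp only [MonoidAlgebra.single_mul_apply, MonoidAlgebra.mul_single_apply, one_mul, mul_one,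
    inv_mul_cancel_left] at h2
  simpa [mul_assoc] using h2.symm

variable [Fact p.Prime]

instance : Fintype (UT p) := Fintype.ofFinite _

lemma fiber_const {x : MonoidAlgebra F (UT p)}
    (hx : x ∈ Subring.center (MonoidAlgebra F (UT p))) {d : (ZMod p)ˣ}
    (hd : (d : ZMod p) * (d : ZMod p) ≠ 1) (k : ZMod p) :
    x.coeff (tm d * um k) = x.coeff (tm d * um 0) := by
  set i : ZMod p := ((d⁻¹ : (ZMod p)ˣ) : ZMod p) with hi
  have hdi : (d : ZMod p) * i = 1 := by
    rw [hi, ← Units.val_mul, mul_inv_cancel, Units.val_one]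
  have hii : i * i - 1 ≠ 0 := by
    intro hcon
    apply hd
    linear_combination (-(d:ZMod p)*(d:ZMod p))*hcon + ((d:ZMod p)*i+1)*hdi
  set t : ZMod p := k / (i * i - 1) with ht
  have hconj := conj_tm_um t d 0
  rw [zero_add, ht, div_mul_cancel₀ _ hii] at hconj
  rw [← hconj]
  exact coeff_conj p F hx _ _

lemma S_eq_zero {x : MonoidAlgebra F (UT p)}
    (hx : x ∈ Subring.center (MonoidAlgebra F (UT p))) {d : (ZMod p)ˣ}
    (hd : (d : ZMod p) * (d : ZMod p) ≠ 1) :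
    ∑ k : ZMod p, x.coeff (tm d * um k) = 0 := by
  have : ∀ k : ZMod p, x.coeff (tm d * um k) = x.coeff (tm d * um 0) := fiber_const p F hx hd
  rw [Finset.sum_congr rfl (fun k _ => this k), Finset.sum_const, Finset.card_univ, ZMod.card,
    nsmul_eq_mul, CharP.cast_eq_zero F p, zero_mul]

lemma Om_eq (a : ℕ) (x : MonoidAlgebra F (UT p)) :
    Om p F a x = ∑ d : (ZMod p)ˣ, (fpCast p F (d : ZMod p)) ^ a * ∑ k : ZMod p, x.coeff (tm d * um k) := by
  rw [Om, MonoidAlgebra.lift_apply]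
  rw [Finsupp.sum_fintype _ _ (fun g => by simp)]
  rw [← Equiv.sum_comp (E (p := p)) (fun g => x.coeff g • chi p F a g), Fintype.sum_prod_type]
  refine Finset.sum_congr rfl fun d _ => ?_
  rw [Finset.mul_sum]
  refine Finset.sum_congr rfl fun k _ => ?_
  show x.coeff (E (d, k)) • chi p F a (E (d, k)) = _
  have hE : E (d, k) = tm d * um k := rfl
  rw [hE, chi_apply, ent_tm_um00, smul_eq_mul, mul_comm]

lemma pprime : Nat.Prime p := Fact.out

/-- the generator of `U` inside the monoid algebra -/
def X0 : MonoidAlgebra F (UT p) := MonoidAlgebra.single (um 1) 1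

lemma single_um_eq_pow (k : ZMod p) :
    MonoidAlgebra.single (um k) (1:F) = (X0 p F) ^ (k.val) := by
  rw [X0, MonoidAlgebra.single_pow, one_pow, um_pow]
  congr 1
  exact (congrArg um (ZMod.natCast_rightInverse k)).symm

lemma X0_pow_p : (X0 p F) ^ p = 1 := by
  rw [X0, MonoidAlgebra.single_pow, one_pow, um_pow]
  have : ((p : ZMod p)) = 0 := by exact_mod_cast ZMod.natCast_self p
  rw [this, um_zero, MonoidAlgebra.one_def]

lemma X0_sub_one_pow_p : ((X0 p F) - 1) ^ p = 0 := by
  haveI := charP_R p F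
  rw [sub_pow_char_of_commute _ (Commute.one_right _), X0_pow_p, one_pow, sub_self]

lemma exists_factor {x : MonoidAlgebra F (UT p)}
    (hS : ∀ d : (ZMod p)ˣ, ∑ k : ZMod p, x.coeff (tm d * um k) = 0) :
    ∃ r : MonoidAlgebra F (UT p), x = r * ((X0 p F) - 1) := by
  classical
  refine ⟨∑ d : (ZMod p)ˣ, MonoidAlgebra.single (tm d) 1 *
      ∑ k : ZMod p, x.coeff (tm d * um k) • ∑ i ∈ Finset.range (k.val), (X0 p F) ^ i, ?_⟩
  have hx : x = ∑ g : UT p, MonoidAlgebra.single g (x.coeff g) := by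
    conv_lhs => rw [← MonoidAlgebra.sum_coeff_single x]
    exact Finsupp.sum_fintype _ _ (fun g => MonoidAlgebra.single_zero g)
  rw [Finset.sum_mul]
  conv_lhs => rw [hx]
  rw [← Equiv.sum_comp (E (p := p)) (fun g => MonoidAlgebra.single g (x.coeff g)),
    Fintype.sum_prod_type]
  refine Finset.sum_congr rfl fun d _ => ?_
  have key : ∀ k : ZMod p, MonoidAlgebra.single (E (d, k)) (x.coeff (E (d, k)))
      = MonoidAlgebra.single (tm d) 1 *
        (x.coeff (tm d * um k) • MonoidAlgebra.single (um k) (1:F)) := by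
    intro k
    have hE : E (d, k) = tm d * um k := rfl
    rw [hE, MonoidAlgebra.smul_single', MonoidAlgebra.single_mul_single, one_mul, mul_one]
  have key2 : ∀ k : ZMod p,
      (x.coeff (tm d * um k) • ∑ i ∈ Finset.range (k.val), (X0 p F) ^ i) * ((X0 p F) - 1)
      = x.coeff (tm d * um k) • MonoidAlgebra.single (um k) (1:F)
        - x.coeff (tm d * um k) • (1 : MonoidAlgebra F (UT p)) := by
    intro k
    rw [smul_mul_assoc, geom_sum_mul, ← single_um_eq_pow, smul_sub]
  rw [mul_assoc, Finset.sum_mul, Finset.sum_congr rfl (fun k _ => key2 k),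
    Finset.sum_sub_distrib, ← Finset.sum_smul, hS d, zero_smul, sub_zero, Finset.mul_sum]
  exact Finset.sum_congr rfl fun k _ => key k

lemma central_pow_p {x : MonoidAlgebra F (UT p)}
    (hx : x ∈ Subring.center (MonoidAlgebra F (UT p)))
    {r : MonoidAlgebra F (UT p)} (hr : x = r * ((X0 p F) - 1)) : x ^ p = 0 := by
  have hpow : ∀ n : ℕ, x ^ (n + 1) = r ^ (n + 1) * ((X0 p F) - 1) ^ (n + 1) := by
    intro n
    induction n with
    | zero => simpa using hr
    | succ m ih =>
        have hcomm : ∀ w : MonoidAlgebra F (UT p), w * x ^ (m+1) = x ^ (m+1) * w := by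
          intro w
          exact (Subring.mem_center_iff.mp (pow_mem hx (m+1)) w)
        calc x ^ (m + 2) = x * x ^ (m+1) := by rw [← pow_succ']
          _ = r * (((X0 p F) - 1) * x ^ (m+1)) := by rw [hr, mul_assoc]
          _ = r * (x ^ (m+1) * ((X0 p F) - 1)) := by rw [hcomm]
          _ = r * (r ^ (m+1) * ((X0 p F) - 1) ^ (m+1) * ((X0 p F) - 1)) := by rw [ih]
          _ = r ^ (m + 2) * ((X0 p F) - 1) ^ (m + 2) := by
              rw [pow_succ' r (m+1), pow_succ ((X0 p F) - 1) (m+1)]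
              simp only [mul_assoc]
  obtain ⟨m, hm⟩ : ∃ m, p = m + 1 := ⟨p - 1, (Nat.succ_pred_eq_of_pos (pprime p).pos).symm⟩
  have h := hpow m
  rw [← hm] at h
  rw [h, X0_sub_one_pow_p, mul_zero]

lemma units_sq_cases (hodd : Odd p) (d : (ZMod p)ˣ) (h : (d : ZMod p) * (d : ZMod p) = 1) :
    d = 1 ∨ d = -1 := by
  rcases mul_eq_zero.mp (show ((d:ZMod p) - 1) * ((d:ZMod p) + 1) = 0 by
    linear_combination h) with h' | h'
  · exact Or.inl (Units.ext (by simpa using (by linear_combination h' : (d:ZMod p) = 1)))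
  · refine Or.inr (Units.ext ?_)
    have : (d : ZMod p) = -1 := by linear_combination h'
    simpa using this

/-- The key nilpotency result: a central element killed by the two characters is nilpotent. -/
theorem central_nilpotent {x : MonoidAlgebra F (UT p)} (hodd : Odd p)
    (hx : x ∈ Subring.center (MonoidAlgebra F (UT p)))
    (h0 : Om p F 0 x = 0) (h1 : Om p F 1 x = 0) : x ^ p = 0 := by
  classical
  have h2 : (2 : F) ≠ 0 := by
    intro hcon
    have hdvd : p ∣ 2 := (CharP.cast_eq_zero_iff F p 2).mp (by exact_mod_cast hcon)
    have h22 := (Nat.prime_dvd_prime_iff_eq (pprime p) Nat.prime_two).mp hdvd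
    rw [h22] at hodd
    exact (by decide : ¬ Odd 2) hodd
  have hne : (1 : (ZMod p)ˣ) ≠ -1 := by
    intro hcon
    have h2' : (1 : ZMod p) = -1 := by
      have := congrArg (fun u : (ZMod p)ˣ => (u : ZMod p)) hcon
      simpa using this
    have h4 : (2 : ZMod p) = 0 := by linear_combination h2'
    have h5 : fpCast p F ((2:ℕ) : ZMod p) = ((2:ℕ) : F) := map_natCast _ 2
    rw [show ((2:ℕ):ZMod p) = (2:ZMod p) by norm_num, h4, map_zero] at h5
    exact h2 (by exact_mod_cast h5.symm)
  set S : (ZMod p)ˣ → F := fun d => ∑ k : ZMod p, x.coeff (tm d * um k) with hSdef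
  have hSgen : ∀ d : (ZMod p)ˣ, (d : ZMod p) * (d : ZMod p) ≠ 1 → S d = 0 :=
    fun d hd => S_eq_zero p F hx hd
  have hsum : ∀ a : ℕ, ∑ d : (ZMod p)ˣ, (fpCast p F (d : ZMod p)) ^ a * S d
      = (fpCast p F ((1 : (ZMod p)ˣ) : ZMod p)) ^ a * S 1
        + (fpCast p F ((-1 : (ZMod p)ˣ) : ZMod p)) ^ a * S (-1) := by
    intro a
    rw [← Finset.sum_subset (Finset.subset_univ ({1, -1} : Finset (ZMod p)ˣ))
      (fun d _ hd => ?_), Finset.sum_pair hne]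
    have hd1 : d ≠ 1 := fun h => hd (by simp [h])
    have hd2 : d ≠ -1 := fun h => hd (by simp [h])
    have : (d : ZMod p) * (d : ZMod p) ≠ 1 := by
      intro hcon
      rcases units_sq_cases p hodd d hcon with h | h
      · exact hd1 h
      · exact hd2 h
    rw [hSgen d this, mul_zero]
  have e0 := Om_eq p F 0 x
  have e1 := Om_eq p F 1 x
  rw [h0, hsum 0] at e0
  rw [h1, hsum 1] at e1
  simp only [pow_zero, pow_one, one_mul, Units.val_one, Units.val_neg, _root_.map_one,
    map_neg] at e0 e1
  have hS1 : S 1 = 0 := by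
    have h21 : (2 : F) * S 1 = 0 := by linear_combination -e0 - e1
    rcases mul_eq_zero.mp h21 with h | h
    · exact absurd h h2
    · exact h
  have hSm1 : S (-1) = 0 := by
    have h21 : (2 : F) * S (-1) = 0 := by linear_combination -e0 + e1
    rcases mul_eq_zero.mp h21 with h | h
    · exact absurd h h2
    · exact h
  have hS : ∀ d : (ZMod p)ˣ, ∑ k : ZMod p, x.coeff (tm d * um k) = 0 := by
    intro d
    by_cases hd : (d : ZMod p) * (d : ZMod p) = 1
    · rcases units_sq_cases p hodd d hd with h | h
      · rw [h]; exact hS1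
      · rw [h]; exact hSm1
    · exact hSgen d hd
  obtain ⟨r, hr⟩ := exists_factor p F hS
  exact central_pow_p p F hx hr

/-- the central element `-I` of `B`. -/
def nm : UT p := tm (-1 : (ZMod p)ˣ)

lemma nm_val : ((nm p : SL2 p) : Matrix (Fin 2) (Fin 2) (ZMod p))
    = !![(-1 : ZMod p), 0; 0, -1] := by
  have hval : (((-1 : (ZMod p)ˣ)⁻¹ : (ZMod p)ˣ) : ZMod p) = -1 := by simp
  show (!![((-1 : (ZMod p)ˣ) : ZMod p), 0; 0, (((-1 : (ZMod p)ˣ)⁻¹ : (ZMod p)ˣ) : ZMod p)]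
    : Matrix (Fin 2) (Fin 2) (ZMod p)) = _
  rw [hval]
  norm_num

lemma nm_central (g : UT p) : g * nm p = nm p * g := by
  apply Subtype.ext; apply Subtype.ext
  rw [Subgroup.coe_mul, Subgroup.coe_mul, Matrix.SpecialLinearGroup.coe_mul,
    Matrix.SpecialLinearGroup.coe_mul, nm_val]
  have h1 : (!![(-1 : ZMod p), 0; 0, -1] : Matrix (Fin 2) (Fin 2) (ZMod p)) = -1 := by
    ext i j; fin_cases i <;> fin_cases j <;> simp [Matrix.one_apply]
  rw [h1, Matrix.mul_neg, Matrix.neg_mul, Matrix.mul_one, Matrix.one_mul]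

lemma nm_sq : (nm p : UT p) * nm p = 1 := by
  apply Subtype.ext; apply Subtype.ext
  rw [Subgroup.coe_mul, Matrix.SpecialLinearGroup.coe_mul, nm_val, OneMemClass.coe_one,
    Matrix.SpecialLinearGroup.coe_one]
  ext i j; fin_cases i <;> fin_cases j <;> simp [Matrix.mul_apply, Fin.sum_univ_two,
    Matrix.one_apply]

lemma nm_inv : (nm p : UT p)⁻¹ = nm p := inv_eq_of_mul_eq_one_right (nm_sq p)

lemma ent_nm : ent (nm p : UT p) 0 0 = -1 := by
  unfold ent; rw [nm_val]; simp

/-- the central element `z = -I` of `F[B]`. -/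
def zc : MonoidAlgebra F (UT p) := MonoidAlgebra.single (nm p) 1

lemma zc_center : zc p F ∈ Subring.center (MonoidAlgebra F (UT p)) := by
  rw [Subring.mem_center_iff]
  intro y
  ext a
  rw [zc, MonoidAlgebra.mul_single_apply, MonoidAlgebra.single_mul_apply, nm_inv, one_mul,
    mul_one]
  exact congrArg y.coeff (nm_central p a)

lemma zc_sq : zc p F * zc p F = 1 := by
  rw [zc, MonoidAlgebra.single_mul_single, nm_sq, one_mul, MonoidAlgebra.one_def]

lemma Om_zc (a : ℕ) : Om p F a (zc p F) = (-1 : F) ^ a := by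
  rw [zc, Om_single, one_mul, chi_apply, ent_nm, map_neg, _root_.map_one]

/-- the idempotent `e = (1 + z)/2`. -/
def ec : MonoidAlgebra F (UT p) := (2 : F)⁻¹ • (1 + zc p F)

lemma ec_center : ec p F ∈ Subring.center (MonoidAlgebra F (UT p)) := by
  rw [Subring.mem_center_iff]
  intro y
  rw [ec, mul_smul_comm, smul_mul_assoc, mul_add, add_mul, mul_one, one_mul,
    Subring.mem_center_iff.mp (zc_center p F) y]

lemma two_ne_zero' (hodd : Odd p) : (2 : F) ≠ 0 := by
  intro hcon
  have hdvd : p ∣ 2 := (CharP.cast_eq_zero_iff F p 2).mp (by exact_mod_cast hcon)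
  have h22 := (Nat.prime_dvd_prime_iff_eq (pprime p) Nat.prime_two).mp hdvd
  rw [h22] at hodd
  exact (by decide : ¬ Odd 2) hodd

lemma ec_idem (hodd : Odd p) : ec p F * ec p F = ec p F := by
  have h2 : (2 : F) ≠ 0 := two_ne_zero' p F hodd
  have hzz : (1 + zc p F) * (1 + zc p F) = (2 : F) • (1 + zc p F) := by
    rw [mul_add, mul_one, add_mul, one_mul, zc_sq,
      show ((2:F) • (1 + zc p F)) = (1 + zc p F) + (1 + zc p F) from two_smul F _]
    abel
  rw [ec, smul_mul_assoc, mul_smul_comm, smul_smul, hzz, smul_smul]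
  congr 1
  field_simp

lemma Om_ec_zero (hodd : Odd p) : Om p F 0 (ec p F) = 1 := by
  rw [ec, _root_.map_smul, map_add, _root_.map_one, Om_zc, pow_zero, smul_eq_mul,
    show (1:F) + 1 = 2 by norm_num, inv_mul_cancel₀ (two_ne_zero' p F hodd)]

lemma Om_ec_one : Om p F 1 (ec p F) = 0 := by
  rw [ec, _root_.map_smul, map_add, _root_.map_one, Om_zc, pow_one, smul_eq_mul]
  norm_num

lemma idemF {a : F} (h : a * a = a) : a = 0 ∨ a = 1 := by
  rcases mul_eq_zero.mp (by linear_combination h : a * (a - 1) = 0) with h' | h'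
  · exact Or.inl h'
  · exact Or.inr (by linear_combination h')

lemma center_cube_zero (hodd : Odd p) (y : Subring.center (MonoidAlgebra F (UT p)))
    (h3 : y ^ 3 = y) (h0 : Om p F 0 (y : MonoidAlgebra F (UT p)) = 0)
    (h1 : Om p F 1 (y : MonoidAlgebra F (UT p)) = 0) : y = 0 := by
  have hy : (y : MonoidAlgebra F (UT p)) ^ p = 0 := central_nilpotent p F hodd y.2 h0 h1
  have hop : ∀ k : ℕ, y ^ (2 * k + 1) = y := by
    intro k
    induction k with
    | zero => simpa using pow_one y
    | succ m ih =>
        have h' : 2 * (m + 1) + 1 = (2 * m + 1) + 2 := by ring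
        rw [h', pow_add, ih]
        have : y * y ^ 2 = y ^ 3 := by ring
        rw [this, h3]
  obtain ⟨m, hm⟩ := hodd
  have hyp : y ^ p = y := by
    have h' := hop m
    rw [← hm] at h'
    exact h'
  have hv : ((y ^ p : Subring.center (MonoidAlgebra F (UT p))) : MonoidAlgebra F (UT p)) = 0 := by
    rw [SubmonoidClass.coe_pow]; exact hy
  rw [hyp] at hv
  exact Subtype.ext hv

end Alg

end Scratch
end

set_option maxHeartbeats 1000000 in
/-- The center of `F[B]` contains exactly two primitive idempotents;
equivalently, `F[B]` has exactly two blocks. -/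
theorem stmt3 (p : ℕ) (hp : p.Prime) (hodd : Odd p)
    (F : Type) [Field F] [IsAlgClosed F] [CharP F p] :
    ∃ e₁ e₂ : Subring.center (MonoidAlgebra F (UT p)), e₁ ≠ e₂ ∧
      IsPrimitiveIdempotent e₁ ∧ IsPrimitiveIdempotent e₂ ∧
      ∀ e : Subring.center (MonoidAlgebra F (UT p)),
        IsPrimitiveIdempotent e → e = e₁ ∨ e = e₂ := by
  classical
  haveI : Fact p.Prime := ⟨hp⟩
  have h2 : (2 : F) ≠ 0 := Scratch.two_ne_zero' p F hodd
  set Z := Subring.center (MonoidAlgebra F (UT p)) with hZ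
  let e₁ : Z := ⟨Scratch.ec p F, Scratch.ec_center p F⟩
  let e₂ : Z := 1 - e₁
  have he1v : (e₁ : MonoidAlgebra F (UT p)) = Scratch.ec p F := rfl
  have he2v : (e₂ : MonoidAlgebra F (UT p)) = 1 - Scratch.ec p F := by
    show ((1 - e₁ : Z) : MonoidAlgebra F (UT p)) = _
    rw [AddSubgroupClass.coe_sub, OneMemClass.coe_one, he1v]
  have hOm0e1 : Scratch.Om p F 0 (e₁ : MonoidAlgebra F (UT p)) = 1 :=
    Scratch.Om_ec_zero p F hodd
  have hOm1e1 : Scratch.Om p F 1 (e₁ : MonoidAlgebra F (UT p)) = 0 := Scratch.Om_ec_one p F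
  have hOm0e2 : Scratch.Om p F 0 (e₂ : MonoidAlgebra F (UT p)) = 0 := by
    rw [he2v, map_sub, _root_.map_one, hOm0e1, sub_self]
  have hOm1e2 : Scratch.Om p F 1 (e₂ : MonoidAlgebra F (UT p)) = 1 := by
    rw [he2v, map_sub, _root_.map_one, hOm1e1, sub_zero]
  have he1idem : e₁ * e₁ = e₁ := Subtype.ext (Scratch.ec_idem p F hodd)
  have he2idem : e₂ * e₂ = e₂ := by
    have : e₂ * e₂ = 1 - e₁ - e₁ + e₁ * e₁ := by show (1-e₁) * (1-e₁) = _; ring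
    rw [this, he1idem]; show 1 - e₁ - e₁ + e₁ = e₂; exact sub_add_cancel _ _
  have key : ∀ e' : Z, e' * e' = e' → Scratch.Om p F 0 (e' : MonoidAlgebra F (UT p)) = 0 →
      Scratch.Om p F 1 (e' : MonoidAlgebra F (UT p)) = 0 → e' = 0 := by
    intro e' hi h0 h1
    have h3 : e' ^ 3 = e' := by
      have h' : e' ^ 3 = e' * e' * e' := by rw [pow_succ, pow_two]
      rw [h', hi, hi]
    exact Scratch.center_cube_zero p F hodd e' h3 h0 h1
  have keyEq : ∀ a b : Z, a * a = a → b * b = b →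
      Scratch.Om p F 0 (a : MonoidAlgebra F (UT p)) = Scratch.Om p F 0 (b : MonoidAlgebra F (UT p)) →
      Scratch.Om p F 1 (a : MonoidAlgebra F (UT p)) = Scratch.Om p F 1 (b : MonoidAlgebra F (UT p)) →
      a = b := by
    intro a b ha hb h0 h1
    have h3 : (a - b) ^ 3 = a - b := by
      linear_combination (a + 1 - 3 * b) * ha + (3 * a - b - 1) * hb
    have h0' : Scratch.Om p F 0 ((a - b : Z) : MonoidAlgebra F (UT p)) = 0 := by
      rw [AddSubgroupClass.coe_sub, map_sub, h0, sub_self]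
    have h1' : Scratch.Om p F 1 ((a - b : Z) : MonoidAlgebra F (UT p)) = 0 := by
      rw [AddSubgroupClass.coe_sub, map_sub, h1, sub_self]
    have := Scratch.center_cube_zero p F hodd (a - b) h3 h0' h1'
    exact sub_eq_zero.mp this
  have hvals : ∀ (e' : Z) (a : ℕ), e' * e' = e' →
      Scratch.Om p F a (e' : MonoidAlgebra F (UT p)) = 0 ∨
      Scratch.Om p F a (e' : MonoidAlgebra F (UT p)) = 1 := by
    intro e' a hi
    apply Scratch.idemF
    rw [← _root_.map_mul, ← MulMemClass.coe_mul, hi]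
  have hone : (1 : F) ≠ 0 := one_ne_zero
  have hprim : ∀ e' : Z, e' * e' = e' →
      Scratch.Om p F 0 (e' : MonoidAlgebra F (UT p)) +
        Scratch.Om p F 1 (e' : MonoidAlgebra F (UT p)) = 1 →
      IsPrimitiveIdempotent e' := by
    intro e' hi hsum01
    refine ⟨?_, hi, ?_⟩
    · intro hcon
      rw [hcon, ZeroMemClass.coe_zero, map_zero, map_zero, add_zero] at hsum01
      exact hone hsum01.symm
    · intro f g hf hg hfg hsum
      have hf' : (f : Z) * f = f := hf
      have hg' : (g : Z) * g = g := hg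
      have htot : (Scratch.Om p F 0 (f : MonoidAlgebra F (UT p)) +
            Scratch.Om p F 0 (g : MonoidAlgebra F (UT p))) +
          (Scratch.Om p F 1 (f : MonoidAlgebra F (UT p)) +
            Scratch.Om p F 1 (g : MonoidAlgebra F (UT p))) = 1 := by
        rw [← _root_.map_add, ← AddMemClass.coe_add, ← hsum, ← _root_.map_add, ← AddMemClass.coe_add, ← hsum]
        exact hsum01
      have horth0 : Scratch.Om p F 0 (f : MonoidAlgebra F (UT p)) *
          Scratch.Om p F 0 (g : MonoidAlgebra F (UT p)) = 0 := by
        rw [← _root_.map_mul, ← MulMemClass.coe_mul, hfg, ZeroMemClass.coe_zero, map_zero]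
      have horth1 : Scratch.Om p F 1 (f : MonoidAlgebra F (UT p)) *
          Scratch.Om p F 1 (g : MonoidAlgebra F (UT p)) = 0 := by
        rw [← _root_.map_mul, ← MulMemClass.coe_mul, hfg, ZeroMemClass.coe_zero, map_zero]
      rcases hvals f 0 hf' with hf0 | hf0 <;> rcases hvals f 1 hf' with hf1 | hf1 <;>
        rcases hvals g 0 hg' with hg0 | hg0 <;> rcases hvals g 1 hg' with hg1 | hg1
      · exact Or.inl (key f hf' hf0 hf1)
      · exact Or.inl (key f hf' hf0 hf1)
      · exact Or.inl (key f hf' hf0 hf1)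
      · exact Or.inl (key f hf' hf0 hf1)
      · exact Or.inr (key g hg' hg0 hg1)
      · rw [hf1, hg1] at horth1
        exact absurd (by linear_combination horth1 : (1:F) = 0) hone
      · rw [hf0, hf1, hg0, hg1] at htot
        exact absurd (by linear_combination htot : (1:F) = 0) hone
      · rw [hf1, hg1] at horth1
        exact absurd (by linear_combination horth1 : (1:F) = 0) hone
      · exact Or.inr (key g hg' hg0 hg1)
      · rw [hf0, hf1, hg0, hg1] at htot
        exact absurd (by linear_combination htot : (1:F) = 0) hone
      · rw [hf0, hg0] at horth0
        exact absurd (by linear_combination horth0 : (1:F) = 0) hone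
      · rw [hf0, hg0] at horth0
        exact absurd (by linear_combination horth0 : (1:F) = 0) hone
      · exact Or.inr (key g hg' hg0 hg1)
      · rw [hf1, hg1] at horth1
        exact absurd (by linear_combination horth1 : (1:F) = 0) hone
      · rw [hf0, hg0] at horth0
        exact absurd (by linear_combination horth0 : (1:F) = 0) hone
      · rw [hf0, hg0] at horth0
        exact absurd (by linear_combination horth0 : (1:F) = 0) hone
  refine ⟨e₁, e₂, ?_, ?_, ?_, ?_⟩
  · intro hcon
    have : (1 : F) = 0 := by rw [← hOm0e1, hcon, hOm0e2]
    exact hone this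
  · exact hprim e₁ he1idem (by rw [hOm0e1, hOm1e1, add_zero])
  · exact hprim e₂ he2idem (by rw [hOm0e2, hOm1e2, zero_add])
  · intro e' he'
    obtain ⟨hne0, hidem, hdec⟩ := he'
    have hi : e' * e' = e' := hidem
    rcases hvals e' 0 hi with h0 | h0 <;> rcases hvals e' 1 hi with h1 | h1
    · exact absurd (key e' hi h0 h1) hne0
    · -- (0,1) : e' = e₂
      exact Or.inr (keyEq e' e₂ hi he2idem (by rw [h0, hOm0e2]) (by rw [h1, hOm1e2]))
    · -- (1,0) : e' = e₁
      exact Or.inl (keyEq e' e₁ hi he1idem (by rw [h0, hOm0e1]) (by rw [h1, hOm1e1]))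
    · -- (1,1) : e' = e₁ + e₂, contradiction with primitivity
      exfalso
      have horth : e₁ * e₂ = 0 := by
        have h' : e₁ * e₂ = e₁ - e₁ * e₁ := by show e₁ * (1 - e₁) = _; ring
        rw [h', he1idem, sub_self]
      have huidem : (e₁ + e₂) * (e₁ + e₂) = e₁ + e₂ := by
        linear_combination he1idem + he2idem + 2 * horth
      have hsplit : e' = e₁ + e₂ := by
        refine keyEq e' (e₁ + e₂) hi huidem ?_ ?_
        · rw [h0, AddMemClass.coe_add, _root_.map_add, hOm0e1, hOm0e2, add_zero]
        · rw [h1, AddMemClass.coe_add, _root_.map_add, hOm1e1, hOm1e2, zero_add]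
      rcases hdec e₁ e₂ he1idem he2idem horth hsplit with h | h
      · have : (1 : F) = 0 := by rw [← hOm0e1, h, ZeroMemClass.coe_zero, map_zero]
        exact hone this
      · have : (1 : F) = 0 := by rw [← hOm1e2, h, ZeroMemClass.coe_zero, map_zero]
        exact hone this
end

section
/- The induction to G of the trivial one-dimensional F[B]-module decomposes as Ind_B^G(S_0) = F[G] ⊗_{F[B]} S_0 ≅ V_1 ⊕ V_p, the direct sum of the trivial F[G]-module and the Steinberg module. -/
noncomputable section Aux14

namespace Aux14

open Matrix MvPolynomial Representation Finset

section Rep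
variable {k G W : Type*} [CommSemiring k] [Monoid G] [AddCommMonoid W] [Module k W]

instance instTower (ρ : Representation k G W) :
    IsScalarTower k (MonoidAlgebra k G) ρ.asModule :=
  ⟨fun c r x => by
    show ρ.asAlgebraHom (c • r) x = c • ρ.asAlgebraHom r x
    rw [_root_.map_smul]; rfl⟩

instance instSMulComm (ρ : Representation k G W) :
    SMulCommClass k (MonoidAlgebra k G) ρ.asModule :=
  ⟨fun c r x => ((ρ.asAlgebraHom r).map_smul c x).symm⟩

lemma of_smul (ρ : Representation k G W) (g : G) (x : ρ.asModule) :
    (MonoidAlgebra.of k G g) • x = ρ g x := by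
  show ρ.asAlgebraHom (MonoidAlgebra.of k G g) x = _
  rw [asAlgebraHom_of]

end Rep

section Coeff
variable {F : Type} [Field F]

def ex (i j : ℕ) : Fin 2 →₀ ℕ := Finsupp.single 0 i + Finsupp.single 1 j

@[simp] lemma ex_apply_0 (i j : ℕ) : ex i j 0 = i := by
  simp [ex, Finsupp.single_apply]

@[simp] lemma ex_apply_1 (i j : ℕ) : ex i j 1 = j := by
  simp [ex, Finsupp.single_apply]

lemma degree_eq (d : Fin 2 →₀ ℕ) : d.degree = d 0 + d 1 := by
  show ∑ i ∈ d.support, d i = _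
  rw [Finset.sum_subset (Finset.subset_univ d.support)
    (fun i _ hi => Finsupp.notMem_support_iff.mp hi), Fin.sum_univ_two]

lemma ex_degree (i j : ℕ) : (ex i j).degree = i + j := by
  rw [degree_eq]; simp

lemma ex_zero_left (j : ℕ) : ex 0 j = Finsupp.single 1 j := by
  ext i; fin_cases i <;> simp [ex, Finsupp.single_apply]

lemma eq_ex (d : Fin 2 →₀ ℕ) : d = ex (d 0) (d 1) := by
  ext i; fin_cases i <;> simp

def mono (n : ℕ) (k : Fin (n + 1)) : homogeneousSubmodule (Fin 2) F n :=
  ⟨monomial (ex (k : ℕ) (n - k)) 1, by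
    rw [mem_homogeneousSubmodule]
    refine isHomogeneous_monomial _ ?_
    have := k.isLt
    rw [ex_degree]; omega⟩

def coeffMap (n : ℕ) : homogeneousSubmodule (Fin 2) F n →ₗ[F] (Fin (n + 1) → F) where
  toFun φ := fun k => coeff (ex (k : ℕ) (n - k)) φ.1
  map_add' φ ψ := by funext k; simp
  map_smul' c φ := by funext k; simp

lemma coeffMap_injective (n : ℕ) :
    Function.Injective (coeffMap (F := F) n) := by
  rw [← LinearMap.ker_eq_bot]
  rw [Submodule.eq_bot_iff]
  intro φ hφ
  rw [LinearMap.mem_ker] at hφ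
  apply Subtype.ext
  show φ.1 = 0
  apply MvPolynomial.ext
  intro d
  rw [coeff_zero]
  by_cases hd : d.degree = n
  · have hd2 := hd
    rw [degree_eq] at hd2
    have h0 : (d : Fin 2 → ℕ) 0 ≤ n := by omega
    have := congrFun hφ ⟨d 0, by omega⟩
    simp only [coeffMap, LinearMap.coe_mk, AddHom.coe_mk, Pi.zero_apply] at this
    have he : ex ((d : Fin 2 → ℕ) 0) (n - (d : Fin 2 → ℕ) 0) = d := by
      conv_rhs => rw [eq_ex d]
      congr 1
      omega
    rwa [he] at this
  · exact (φ.2 : IsHomogeneous _ n).coeff_eq_zero hd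

lemma coeffMap_mono (n : ℕ) (k j : Fin (n + 1)) :
    coeffMap (F := F) n (mono n k) j = if j = k then 1 else 0 := by
  show coeff (ex (j : ℕ) (n - j)) (monomial (ex (k : ℕ) (n - k)) 1) = _
  rw [coeff_monomial]
  congr 1
  simp only [eq_iff_iff]
  constructor
  · intro h
    have := congrArg (fun e => e 0) h
    simp only [ex_apply_0] at this
    exact (Fin.ext (this.symm) : j = k)
  · intro h; rw [h]

lemma coeffMap_surjective (n : ℕ) :
    Function.Surjective (coeffMap (F := F) n) := by
  intro u
  refine ⟨∑ k, u k • mono n k, ?_⟩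
  funext j
  rw [map_sum]
  simp only [_root_.map_smul]
  rw [Finset.sum_apply]
  simp only [Pi.smul_apply, coeffMap_mono, smul_eq_mul, mul_ite, mul_one, mul_zero]
  simp

def coeffEquiv (n : ℕ) :
    homogeneousSubmodule (Fin 2) F n ≃ₗ[F] (Fin (n + 1) → F) :=
  LinearEquiv.ofBijective (coeffMap n) ⟨coeffMap_injective n, coeffMap_surjective n⟩

lemma finrank_hsub (n : ℕ) :
    Module.finrank F (homogeneousSubmodule (Fin 2) F n) = n + 1 := by
  rw [(coeffEquiv (F := F) n).finrank_eq]
  simp [Module.finrank_pi]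

instance (n : ℕ) : FiniteDimensional F (homogeneousSubmodule (Fin 2) F n) :=
  Module.Finite.equiv (coeffEquiv (F := F) n).symm

lemma eq_smul_mono0 (φ : homogeneousSubmodule (Fin 2) F 0) :
    φ = (coeff 0 φ.1) • mono 0 0 := by
  apply coeffMap_injective 0
  rw [_root_.map_smul]
  funext j
  have hj : j = 0 := Fin.ext (by omega)
  subst hj
  rw [Pi.smul_apply, coeffMap_mono]
  show coeff (ex 0 0) φ.1 = _
  have : ex 0 0 = (0 : Fin 2 →₀ ℕ) := by ext i; fin_cases i <;> simp
  rw [this]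
  simp

end Coeff
section Act

variable (p : ℕ) (F : Type) [Field F] [CharP F p]

lemma substAux_monomial (g : SL2 p) (i j : ℕ) :
    substAux p F g (monomial (ex i j) 1) =
      (C (fpCast p F ((g : Matrix (Fin 2) (Fin 2) (ZMod p)) 0 0)) * X 0 +
       C (fpCast p F ((g : Matrix (Fin 2) (Fin 2) (ZMod p)) 0 1)) * X 1) ^ i *
      (C (fpCast p F ((g : Matrix (Fin 2) (Fin 2) (ZMod p)) 1 0)) * X 0 +
       C (fpCast p F ((g : Matrix (Fin 2) (Fin 2) (ZMod p)) 1 1)) * X 1) ^ j := by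
  have hx : (monomial (ex i j) (1 : F)) = X 0 ^ i * X 1 ^ j := by
    rw [X_pow_eq_monomial, X_pow_eq_monomial, monomial_mul, one_mul]
    rfl
  rw [hx, _root_.map_mul, map_pow, map_pow]
  congr 2 <;> simp [substAux, Fin.sum_univ_two]

lemma coe_vrep_apply (n : ℕ) (g : SL2 p) (φ : homogeneousSubmodule (Fin 2) F n) :
    ((Vrep p F n g φ : homogeneousSubmodule (Fin 2) F n) : MvPolynomial (Fin 2) F) =
      substAux p F g⁻¹ (φ : MvPolynomial (Fin 2) F) := rfl

lemma vrep_one1 (g : SL2 p) : Vrep p F 0 g (mono 0 0) = mono 0 0 := by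
  apply Subtype.ext
  rw [coe_vrep_apply]
  show substAux p F g⁻¹ (monomial (ex ((0 : Fin 1) : ℕ) (0 - (0 : Fin 1))) 1) = _
  have h0 : ((0 : Fin 1) : ℕ) = 0 := rfl
  rw [h0, substAux_monomial]
  simp only [pow_zero, one_mul, Nat.sub_zero, mul_one]
  show (1 : MvPolynomial (Fin 2) F) = monomial (ex 0 0) 1
  have hz : ex 0 0 = (0 : Fin 2 →₀ ℕ) := by ext i; fin_cases i <;> simp
  rw [hz, monomial_zero', C_1]

lemma sl2_det (g : SL2 p) :
    (g : Matrix (Fin 2) (Fin 2) (ZMod p)) 0 0 * (g : Matrix (Fin 2) (Fin 2) (ZMod p)) 1 1 -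
      (g : Matrix (Fin 2) (Fin 2) (ZMod p)) 0 1 * (g : Matrix (Fin 2) (Fin 2) (ZMod p)) 1 0
      = 1 := by
  have := g.2
  rwa [Matrix.det_fin_two] at this

lemma vrep_yp [Fact p.Prime] (b : UT p) :
    Vrep p F (p - 1) (b : SL2 p) (mono (p - 1) 0) = mono (p - 1) 0 := by
  apply Subtype.ext
  rw [coe_vrep_apply]
  show substAux p F (b : SL2 p)⁻¹ (monomial (ex ((0 : Fin (p - 1 + 1)) : ℕ)
    (p - 1 - (0 : Fin (p - 1 + 1)))) 1) = monomial (ex ((0 : Fin (p - 1 + 1)) : ℕ)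
    (p - 1 - (0 : Fin (p - 1 + 1)))) 1
  have h0 : ((0 : Fin (p - 1 + 1)) : ℕ) = 0 := rfl
  rw [h0, Nat.sub_zero, substAux_monomial, pow_zero, one_mul]
  set M := (((b : SL2 p)⁻¹ : SL2 p) : Matrix (Fin 2) (Fin 2) (ZMod p)) with hM
  have h10 : M 1 0 = 0 := by
    have : (b : SL2 p)⁻¹ ∈ UT p := (UT p).inv_mem b.2
    exact this
  have h11 : M 1 1 ≠ 0 := by
    intro h
    have hd := sl2_det p ((b : SL2 p)⁻¹)
    rw [← hM, h10, h, mul_zero, mul_zero, sub_zero] at hd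
    
    exact zero_ne_one hd
  rw [h10]
  have hpow : (fpCast p F (M 1 1)) ^ (p - 1) = 1 := by
    rw [← _root_.map_pow, ZMod.pow_card_sub_one_eq_one h11, _root_.map_one]
  rw [map_zero, C_0, zero_mul, zero_add, mul_pow, ← C_pow, hpow, C_1, one_mul,
    X_pow_eq_monomial, ex_zero_left]

end Act

section Mu

variable (p : ℕ) (F : Type) [Field F] [CharP F p]

instance instTowerV (t : ℕ) : IsScalarTower F (MonoidAlgebra F (SL2 p)) (V p F t) :=
  inferInstanceAs (IsScalarTower F _ ((Vrep p F (t - 1)).asModule))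

instance instCommV (t : ℕ) : SMulCommClass F (MonoidAlgebra F (SL2 p)) (V p F t) :=
  inferInstanceAs (SMulCommClass F _ ((Vrep p F (t - 1)).asModule))

lemma of_smul_V (t : ℕ) (g : SL2 p) (v : V p F t) :
    (MonoidAlgebra.of F (SL2 p) g) • v = Vrep p F (t - 1) g v :=
  of_smul _ g v

/-- The generating vector `(1, y^(p-1))`. -/
def v0 : V p F 1 × V p F p := (mono 0 0, mono (p - 1) 0)

lemma b_smul_v0 [Fact p.Prime] (b : UT p) :
    (MonoidAlgebra.of F (SL2 p) (b : SL2 p)) • v0 p F = v0 p F := by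
  apply Prod.ext
  · show (MonoidAlgebra.of F (SL2 p) (b : SL2 p)) • (v0 p F).1 = _
    rw [of_smul_V]
    exact vrep_one1 p F _
  · show (MonoidAlgebra.of F (SL2 p) (b : SL2 p)) • (v0 p F).2 = _
    rw [of_smul_V]
    exact vrep_yp p F b

lemma of_smul_S (b : UT p) (s : S p F 0) :
    (MonoidAlgebra.of F (UT p) b) • s = s := by
  refine (of_smul (Srep p F 0) b s).trans ?_
  show chi p F 0 b • (1 : F →ₗ[F] F) s = s
  simp [chi]
  rfl

/-- the linear map `S_0 → V_1 × V_p`, `s ↦ s • v0`. -/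
def f0 : S p F 0 →ₗ[F] (V p F 1 × V p F p) where
  toFun s := (show F from s) • v0 p F
  map_add' s t := add_smul (show F from s) (show F from t) (v0 p F)
  map_smul' c s := mul_smul c (show F from s) (v0 p F)

def muMap : TensorProduct F (MonoidAlgebra F (SL2 p)) (S p F 0)
    →ₗ[MonoidAlgebra F (SL2 p)] (V p F 1 × V p F p) :=
  TensorProduct.AlgebraTensorModule.lift
    (LinearMap.toSpanSingleton (MonoidAlgebra F (SL2 p)) _ (f0 p F))

lemma muMap_tmul (z : MonoidAlgebra F (SL2 p)) (s : S p F 0) :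
    muMap p F (z ⊗ₜ[F] s) = z • ((show F from s) • v0 p F) := by
  show TensorProduct.AlgebraTensorModule.lift _ (z ⊗ₜ[F] s) = _
  rw [TensorProduct.AlgebraTensorModule.lift_tmul, LinearMap.toSpanSingleton_apply,
    LinearMap.smul_apply]
  rfl

lemma indRel_le_ker [Fact p.Prime] : indRel p F 0 ≤ LinearMap.ker (muMap p F) := by
  rw [indRel, Submodule.span_le]
  rintro z ⟨b, s, rfl⟩
  rw [SetLike.mem_coe, LinearMap.mem_ker, map_sub, muMap_tmul, muMap_tmul,
    of_smul_S, one_smul, smul_comm, b_smul_v0, sub_self]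

/-- The main map `Ind → V_1 × V_p`. -/
def Phi [Fact p.Prime] : Ind p F 0 →ₗ[MonoidAlgebra F (SL2 p)] (V p F 1 × V p F p) :=
  Submodule.liftQ _ (muMap p F) (indRel_le_ker p F)

end Mu
section ZModFacts

lemma zmod_sum_pow (p : ℕ) [Fact p.Prime] : ∑ t : ZMod p, t ^ (p - 1) = -1 := by
  have hp2 : 2 ≤ p := (Fact.out : p.Prime).two_le
  have hcong : ∀ t : ZMod p, t ^ (p - 1) = if t = 0 then 0 else 1 := by
    intro t
    split
    · rename_i h
      subst h
      rw [zero_pow (by omega)]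
    · exact ZMod.pow_card_sub_one_eq_one ‹_›
  rw [Finset.sum_congr rfl (fun t _ => hcong t), Finset.sum_ite, Finset.sum_const,
    Finset.sum_const, smul_zero, zero_add, Finset.filter_ne', Finset.card_erase_of_mem
    (Finset.mem_univ _), Finset.card_univ, ZMod.card, nsmul_eq_mul, mul_one,
    Nat.cast_sub (by omega : 1 ≤ p), ZMod.natCast_self, Nat.cast_one, zero_sub]

lemma zmod_choose (p : ℕ) [Fact p.Prime] {k : ℕ} (hk : k ≤ p - 1) :
    (((p - 1).choose k : ℕ) : ZMod p) = (-1) ^ k := by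
  have hp2 : 2 ≤ p := (Fact.out : p.Prime).two_le
  induction k with
  | zero => simp
  | succ k ih =>
    have hk' : k ≤ p - 1 := by omega
    have hne : ((k + 1 : ℕ) : ZMod p) ≠ 0 := by
      rw [Ne, ZMod.natCast_eq_zero_iff]
      intro h
      have := Nat.le_of_dvd (by omega) h
      omega
    apply mul_right_cancel₀ hne
    have hcast : (((p - 1).choose (k + 1) * (k + 1) : ℕ) : ZMod p)
        = (((p - 1).choose k * (p - 1 - k) : ℕ) : ZMod p) := by
      rw [Nat.choose_succ_right_eq]
    rw [Nat.cast_mul, Nat.cast_mul] at hcast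
    rw [hcast, ih hk']
    have h1 : ((p - 1 - k : ℕ) : ZMod p) = -((k + 1 : ℕ) : ZMod p) := by
      rw [Nat.cast_sub hk', Nat.cast_sub (by omega : 1 ≤ p), ZMod.natCast_self]
      push_cast
      ring
    rw [h1, pow_succ]
    ring

lemma choose_ne_zero_F (p : ℕ) [Fact p.Prime] (F : Type) [Field F] [CharP F p]
    {k : ℕ} (hk : k ≤ p - 1) : (((p - 1).choose k : ℕ) : F) ≠ 0 := by
  have heq : (((p - 1).choose k : ℕ) : F) = fpCast p F (((p - 1).choose k : ℕ) : ZMod p) := by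
    rw [map_natCast]
  rw [heq, zmod_choose p hk]
  intro h
  exact pow_ne_zero k (neg_ne_zero.mpr (one_ne_zero : (1 : ZMod p) ≠ 0))
    ((fpCast p F).injective (by rw [h, map_zero]))

end ZModFacts

section Span

variable (p : ℕ) (F : Type) [Field F] [CharP F p]

/-- The lower unipotent matrix `[[1,0],[t,1]]`. -/
def lt (t : ZMod p) : SL2 p :=
  ⟨!![1, 0; t, 1], by simp [Matrix.det_fin_two_of]⟩

lemma lt_inv (t : ZMod p) : (lt p t)⁻¹ = lt p (-t) := by
  apply inv_eq_of_mul_eq_one_right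
  apply Subtype.ext
  show (!![1, 0; t, 1] : Matrix (Fin 2) (Fin 2) (ZMod p)) * !![1, 0; -t, 1] = 1
  ext i j
  fin_cases i <;> fin_cases j <;>
    simp [Matrix.mul_apply, Fin.sum_univ_two, Matrix.one_apply]

/-- The matrix `[[s,1],[-1,0]]`; its inverse has top row `(0,-1)`. -/
def gInv (s : ZMod p) : SL2 p :=
  ⟨!![s, 1; -1, 0], by simp [Matrix.det_fin_two_of]⟩

lemma monomial_ex (i j : ℕ) (c : F) :
    monomial (ex i j) c = C c * X 0 ^ i * X 1 ^ j := by
  rw [C_apply, X_pow_eq_monomial, X_pow_eq_monomial, monomial_mul, monomial_mul,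
    mul_one, mul_one, zero_add]
  rfl

lemma coeff_pow_lin (a : F) (n k : ℕ) (hk : k ≤ n) :
    coeff (ex k (n - k)) ((C a * X 0 + X 1) ^ n) = a ^ k * (n.choose k : F) := by
  rw [add_pow, coeff_sum]
  have hterm : ∀ m : ℕ,
      (C a * X 0) ^ m * X 1 ^ (n - m) * ((n.choose m : ℕ) : MvPolynomial (Fin 2) F)
      = monomial (ex m (n - m)) (a ^ m * (n.choose m : F)) := by
    intro m
    rw [monomial_ex, C_mul, ← map_natCast (C : F →+* MvPolynomial (Fin 2) F), C_pow]
    ring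
  rw [Finset.sum_congr rfl (fun m _ => by rw [hterm m])]
  rw [Finset.sum_eq_single_of_mem k (Finset.mem_range.mpr (by omega))]
  · rw [coeff_monomial, if_pos rfl]
  · intro m _ hm
    rw [coeff_monomial, if_neg]
    intro h
    exact hm (by
      have := congrArg (fun e => e 0) h
      simpa using this)

/-- rows of an invertible square matrix span everything -/
lemma rows_span {m : ℕ} (M : Matrix (Fin m) (Fin m) F) (h : IsUnit M.det) :
    Submodule.span F (Set.range (fun i => M i)) = ⊤ := by
  rw [eq_top_iff]
  intro u _
  have expand : ∀ v : Fin m → F, Matrix.vecMul v M = ∑ i, v i • M i := by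
    intro v
    funext k
    rw [Finset.sum_apply]
    simp [Matrix.vecMul, dotProduct]
  have hu : u = ∑ i, (Matrix.vecMul u M⁻¹) i • M i := by
    rw [← expand, Matrix.vecMul_vecMul, Matrix.nonsing_inv_mul M h, Matrix.vecMul_one]
  rw [hu]
  exact Submodule.sum_mem _ fun i _ =>
    Submodule.smul_mem _ _ (Submodule.subset_span ⟨i, rfl⟩)

variable [Fact p.Prime]

/-- the spanning family: images of `x^(p-1)` under upper unipotent-like elements -/
def wfam (i : Fin (p - 1 + 1)) : homogeneousSubmodule (Fin 2) F (p - 1) :=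
  Vrep p F (p - 1) (gInv p ((i : ℕ) : ZMod p))⁻¹ (mono (p - 1) (Fin.last (p - 1)))

lemma coe_wfam (i : Fin (p - 1 + 1)) :
    (wfam p F i : MvPolynomial (Fin 2) F)
      = (C (fpCast p F ((i : ℕ) : ZMod p)) * X 0 + X 1) ^ (p - 1) := by
  rw [wfam, coe_vrep_apply, inv_inv]
  show substAux p F (gInv p _) (monomial (ex ((Fin.last (p-1) : ℕ))
    (p - 1 - (Fin.last (p-1) : ℕ))) 1) = _
  rw [Fin.val_last, Nat.sub_self, substAux_monomial, pow_zero, mul_one]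
  have h00 : ((gInv p ((i : ℕ) : ZMod p)) : Matrix (Fin 2) (Fin 2) (ZMod p)) 0 0
      = ((i : ℕ) : ZMod p) := rfl
  have h01 : ((gInv p ((i : ℕ) : ZMod p)) : Matrix (Fin 2) (Fin 2) (ZMod p)) 0 1
      = 1 := rfl
  rw [h00, h01, _root_.map_one, C_1, one_mul]

lemma wfam_span : Submodule.span F (Set.range (wfam p F)) = ⊤ := by
  classical
  have hp2 : 2 ≤ p := (Fact.out : p.Prime).two_le
  set n := p - 1 with hn
  -- the coordinate matrix
  set M : Matrix (Fin (n + 1)) (Fin (n + 1)) F :=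
    Matrix.vandermonde (fun i => fpCast p F ((i : ℕ) : ZMod p)) *
      Matrix.diagonal (fun k : Fin (n + 1) => ((n.choose (k : ℕ) : ℕ) : F)) with hM
  have hMapp : ∀ i k, M i k = (fpCast p F ((i : ℕ) : ZMod p)) ^ (k : ℕ) * ((n.choose (k : ℕ) : ℕ) : F) := by
    intro i k
    rw [hM, Matrix.mul_diagonal]
    rfl
  have hdet : IsUnit M.det := by
    rw [hM, Matrix.det_mul, Matrix.det_diagonal, Matrix.det_vandermonde]
    apply IsUnit.mul
    · rw [isUnit_iff_ne_zero]
      apply Finset.prod_ne_zero_iff.mpr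
      intro i _
      apply Finset.prod_ne_zero_iff.mpr
      intro j hj
      have hij' : i < j := Finset.mem_Ioi.mp hj
      rw [sub_ne_zero]
      intro hij
      have hvv : ((j : ℕ) : ZMod p) = ((i : ℕ) : ZMod p) := (fpCast p F).injective hij
      have hv := congrArg ZMod.val hvv
      have hi := i.isLt
      have hj2 := j.isLt
      rw [ZMod.val_natCast_of_lt (by omega : (j : ℕ) < p),
        ZMod.val_natCast_of_lt (by omega : (i : ℕ) < p)] at hv
      have : (i : ℕ) < (j : ℕ) := hij'
      omega
    · rw [isUnit_iff_ne_zero]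
      apply Finset.prod_ne_zero_iff.mpr
      intro k _
      exact choose_ne_zero_F p F (by omega : (k : ℕ) ≤ p - 1)
  -- the coordinates of wfam form the rows of M
  have hcoords : ∀ i, coeffMap n (wfam p F i) = M i := by
    intro i
    funext k
    show coeff (ex (k : ℕ) (n - k)) (wfam p F i : MvPolynomial (Fin 2) F) = M i k
    rw [coe_wfam, hMapp, coeff_pow_lin F _ _ _ (by omega : (k : ℕ) ≤ n)]
  -- transfer spanning through the coefficient equivalence
  have hspan : Submodule.map (coeffMap (F := F) n)
      (Submodule.span F (Set.range (wfam p F))) = ⊤ := by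
    rw [Submodule.map_span, ← Set.range_comp]
    have hfun : (⇑(coeffMap (F := F) n) ∘ wfam p F) = fun i => M i := by
      funext i
      exact hcoords i
    rw [hfun]
    exact rows_span F M hdet
  rw [LinearMap.map_eq_top_iff (LinearMap.range_eq_top.mpr (coeffMap_surjective (F := F) n)),
    LinearMap.ker_eq_bot.mpr (coeffMap_injective (F := F) n), sup_bot_eq] at hspan
  exact hspan

end Span
section PowerSum

variable (p : ℕ) (F : Type) [Field F] [CharP F p] [Fact p.Prime]

lemma vrep_lt_yp (t : ZMod p) :
    ((Vrep p F (p - 1) (lt p t) (mono (p - 1) 0) : homogeneousSubmodule (Fin 2) F (p - 1))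
        : MvPolynomial (Fin 2) F)
      = (C (fpCast p F (-t)) * X 0 + X 1) ^ (p - 1) := by
  rw [coe_vrep_apply, lt_inv]
  show substAux p F (lt p (-t)) (monomial (ex ((0 : Fin (p - 1 + 1)) : ℕ)
    (p - 1 - ((0 : Fin (p - 1 + 1)) : ℕ))) 1) = _
  have h0 : ((0 : Fin (p - 1 + 1)) : ℕ) = 0 := rfl
  rw [h0, Nat.sub_zero, substAux_monomial, pow_zero, one_mul]
  have h10 : ((lt p (-t)) : Matrix (Fin 2) (Fin 2) (ZMod p)) 1 0 = -t := rfl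
  have h11 : ((lt p (-t)) : Matrix (Fin 2) (Fin 2) (ZMod p)) 1 1 = 1 := rfl
  rw [h10, h11, _root_.map_one, C_1, one_mul]

lemma sum_vrep_lt :
    ∑ t : ZMod p, Vrep p F (p - 1) (lt p t) (mono (p - 1) 0)
      = - mono (p - 1) (Fin.last (p - 1)) := by
  have hp2 : 2 ≤ p := (Fact.out : p.Prime).two_le
  apply coeffMap_injective (F := F) (p - 1)
  rw [map_sum, map_neg]
  funext k
  rw [Finset.sum_apply, Pi.neg_apply]
  have hterm : ∀ t : ZMod p,
      coeffMap (p - 1) (Vrep p F (p - 1) (lt p t) (mono (p - 1) 0)) k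
      = fpCast p F ((-t) ^ (k : ℕ)) * (((p - 1).choose (k : ℕ) : ℕ) : F) := by
    intro t
    show coeff (ex (k : ℕ) (p - 1 - (k : ℕ)))
      ((Vrep p F (p - 1) (lt p t) (mono (p - 1) 0) : homogeneousSubmodule (Fin 2) F (p - 1))
        : MvPolynomial (Fin 2) F) = _
    rw [vrep_lt_yp, coeff_pow_lin F _ _ _ (by omega : (k : ℕ) ≤ p - 1), _root_.map_pow]
  rw [Finset.sum_congr rfl (fun t _ => hterm t), ← Finset.sum_mul, ← map_sum]
  have hneg : ∑ t : ZMod p, (-t) ^ (k : ℕ) = ∑ t : ZMod p, t ^ (k : ℕ) :=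
    Fintype.sum_equiv (Equiv.neg (ZMod p)) _ _ (fun t => rfl)
  rw [hneg, coeffMap_mono]
  by_cases hk : k = Fin.last (p - 1)
  · subst hk
    rw [if_pos rfl]
    have hlast : ((Fin.last (p - 1) : Fin (p - 1 + 1)) : ℕ) = p - 1 := Fin.val_last _
    rw [hlast, zmod_sum_pow p, Nat.choose_self, Nat.cast_one, mul_one, map_neg,
      _root_.map_one]
  · rw [if_neg hk]
    have hklt : (k : ℕ) < p - 1 := by
      have := k.isLt
      have hne : (k : ℕ) ≠ p - 1 := fun h => hk (by
        apply Fin.ext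
        rw [h, Fin.val_last])
      omega
    have hzero : ∑ t : ZMod p, t ^ (k : ℕ) = 0 :=
      FiniteField.sum_pow_lt_card_sub_one (ZMod p) (k : ℕ) (by rw [ZMod.card]; omega)
    rw [hzero, map_zero, zero_mul, neg_zero]

end PowerSum

section Surj

variable (p : ℕ) (F : Type) [Field F] [CharP F p] [Fact p.Prime]

lemma v0_mem : v0 p F ∈ LinearMap.range (muMap p F) := by
  refine ⟨(1 : MonoidAlgebra F (SL2 p)) ⊗ₜ[F] (show S p F 0 from (1 : F)), ?_⟩
  rw [muMap_tmul, one_smul]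
  exact one_smul F (v0 p F)

lemma zero_pair_mem (u : homogeneousSubmodule (Fin 2) F (p - 1)) :
    ((0, u) : V p F 1 × V p F p) ∈ LinearMap.range (muMap p F) := by
  set T := LinearMap.range (muMap p F) with hT
  -- step 1: (0, -x^(p-1)) ∈ T
  have hstep1 : ((0, -mono (p - 1) (Fin.last (p - 1))) : V p F 1 × V p F p) ∈ T := by
    have hmem : (∑ t : ZMod p, MonoidAlgebra.of F (SL2 p) (lt p t)) • v0 p F ∈ T :=
      Submodule.smul_mem T _ (v0_mem p F)
    have heq : (∑ t : ZMod p, MonoidAlgebra.of F (SL2 p) (lt p t)) • v0 p F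
        = ((0, -mono (p - 1) (Fin.last (p - 1))) : V p F 1 × V p F p) := by
      rw [Finset.sum_smul]
      have hterm : ∀ t : ZMod p, (MonoidAlgebra.of F (SL2 p) (lt p t)) • v0 p F
          = ((mono 0 0, Vrep p F (p - 1) (lt p t) (mono (p - 1) 0)) : V p F 1 × V p F p) := by
        intro t
        rw [show v0 p F = ((mono 0 0, mono (p - 1) 0) : V p F 1 × V p F p) from rfl]
        refine (Prod.smul_mk _ _ _).trans ?_
        congr 1
        · refine (of_smul_V p F 1 _ _).trans ?_
          exact vrep_one1 p F _
        · exact of_smul_V p F p _ _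
      rw [Finset.sum_congr rfl (fun t _ => hterm t)]
      apply Prod.ext
      · rw [Prod.fst_sum]
        show ∑ _t : ZMod p, (mono 0 0 : V p F 1) = 0
        rw [Finset.sum_const, Finset.card_univ, ZMod.card,
          ← Nat.cast_smul_eq_nsmul F p, CharP.cast_eq_zero F p, zero_smul]
      · rw [Prod.snd_sum]
        exact sum_vrep_lt p F
    rw [← heq]
    exact hmem
  -- step 2: each (0, wfam i) ∈ T
  have hstep2 : ∀ i : Fin (p - 1 + 1),
      ((0, wfam p F i) : V p F 1 × V p F p) ∈ T := by
    intro i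
    have hx : ((0, mono (p - 1) (Fin.last (p - 1))) : V p F 1 × V p F p) ∈ T := by
      have hneg := Submodule.neg_mem T hstep1
      rwa [show -((0, -mono (p - 1) (Fin.last (p - 1))) : V p F 1 × V p F p)
        = (0, mono (p - 1) (Fin.last (p - 1))) from Prod.ext neg_zero (neg_neg _)] at hneg
    have hsm := Submodule.smul_mem T
      (MonoidAlgebra.of F (SL2 p) ((gInv p ((i : ℕ) : ZMod p))⁻¹)) hx
    have heq : (MonoidAlgebra.of F (SL2 p) ((gInv p ((i : ℕ) : ZMod p))⁻¹)) •
        ((0, mono (p - 1) (Fin.last (p - 1))) : V p F 1 × V p F p)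
        = ((0, wfam p F i) : V p F 1 × V p F p) := by
      refine (Prod.smul_mk _ _ _).trans ?_
      congr 1
      · exact (of_smul_V p F 1 _ _).trans (_root_.map_zero _)
      · refine (of_smul_V p F p _ _).trans ?_
        rfl
    rwa [heq] at hsm
  -- step 3: all (0, u)
  have hu : u ∈ Submodule.span F (Set.range (wfam p F)) := by
    rw [wfam_span p F]; trivial
  obtain ⟨c, hc⟩ := (Submodule.mem_span_range_iff_exists_fun F).mp hu
  have heq : ((0, u) : V p F 1 × V p F p)
      = ∑ i, c i • ((0, wfam p F i) : V p F 1 × V p F p) := by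
    apply Prod.ext
    · rw [Prod.fst_sum]
      simp
    · rw [Prod.snd_sum]
      simp only [Prod.smul_mk]
      exact hc.symm
  rw [heq]
  exact Submodule.sum_mem T (fun i _ => Submodule.smul_of_tower_mem T (c i) (hstep2 i))

lemma muMap_surjective : Function.Surjective (muMap p F) := by
  rw [← LinearMap.range_eq_top, eq_top_iff]
  rintro ⟨q, u⟩ -
  set T := LinearMap.range (muMap p F) with hT
  have h1 : ((mono 0 0, (0 : V p F p)) : V p F 1 × V p F p) ∈ T := by
    have hsub := Submodule.sub_mem T (v0_mem p F) (zero_pair_mem p F (mono (p - 1) 0))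
    have heq : v0 p F - ((0, mono (p - 1) 0) : V p F 1 × V p F p)
        = ((mono 0 0, (0 : V p F p)) : V p F 1 × V p F p) := by
      show ((mono 0 0 : V p F 1), (mono (p - 1) 0 : V p F p)) - _ = _
      exact Prod.ext (sub_zero _) (sub_self _)
    rwa [heq] at hsub
  have hq : ((q, (0 : V p F p)) : V p F 1 × V p F p) ∈ T := by
    obtain ⟨cq, hcq⟩ : ∃ cq : F, (show homogeneousSubmodule (Fin 2) F 0 from q)
        = cq • mono 0 0 := ⟨_, eq_smul_mono0 _⟩
    have hsm := Submodule.smul_of_tower_mem T cq h1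
    have heq : cq • ((mono 0 0, (0 : V p F p)) : V p F 1 × V p F p)
        = ((q, (0 : V p F p))) := by
      refine (Prod.smul_mk _ _ _).trans ?_
      rw [smul_zero]
      congr 1
      exact hcq.symm
    rwa [heq] at hsm
  have h2 := zero_pair_mem p F u
  have := Submodule.add_mem T hq h2
  rwa [Prod.mk_add_mk, add_zero, zero_add] at this

end Surj
section FinrankInd

variable (p : ℕ) (F : Type) [Field F] [CharP F p] [Fact p.Prime]

def wMat : SL2 p := ⟨!![0, -1; 1, 0], by simp [Matrix.det_fin_two_of]⟩

lemma wMat_inv : (wMat p)⁻¹ = ⟨!![0, 1; -1, 0], by simp [Matrix.det_fin_two_of]⟩ := by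
  apply inv_eq_of_mul_eq_one_right
  apply Subtype.ext
  show (!![0, -1; 1, 0] : Matrix (Fin 2) (Fin 2) (ZMod p)) * !![0, 1; -1, 0] = 1
  ext i j
  fin_cases i <;> fin_cases j <;>
    simp [Matrix.mul_apply, Fin.sum_univ_two, Matrix.one_apply]

def reps : Option (ZMod p) → SL2 p
  | none => wMat p
  | some t => lt p t

lemma decomp (g : SL2 p) : ∃ o : Option (ZMod p), ((reps p o)⁻¹ * g) ∈ UT p := by
  by_cases h : (g : Matrix (Fin 2) (Fin 2) (ZMod p)) 0 0 = 0
  · refine ⟨none, ?_⟩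
    show ((((reps p none)⁻¹ * g : SL2 p)) : Matrix (Fin 2) (Fin 2) (ZMod p)) 1 0 = 0
    show ((((wMat p)⁻¹ * g : SL2 p)) : Matrix (Fin 2) (Fin 2) (ZMod p)) 1 0 = 0
    rw [Matrix.SpecialLinearGroup.coe_mul, Matrix.mul_apply, Fin.sum_univ_two]
    rw [congrArg (fun x : SL2 p => (x : Matrix (Fin 2) (Fin 2) (ZMod p))) (wMat_inv p)]
    have e0 : (!![0, 1; -1, 0] : Matrix (Fin 2) (Fin 2) (ZMod p)) 1 0 = -1 := rfl
    have e1 : (!![0, 1; -1, 0] : Matrix (Fin 2) (Fin 2) (ZMod p)) 1 1 = 0 := rfl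
    show (⟨!![0, 1; -1, 0], _⟩ : SL2 p).1 1 0 * _ + (⟨!![0, 1; -1, 0], _⟩ : SL2 p).1 1 1 * _ = 0
    rw [show ((⟨!![0, 1; -1, 0], by simp [Matrix.det_fin_two_of]⟩ : SL2 p) :
      Matrix (Fin 2) (Fin 2) (ZMod p)) = !![0, 1; -1, 0] from rfl, e0, e1, h]
    ring
  · set t : ZMod p := (g : Matrix (Fin 2) (Fin 2) (ZMod p)) 1 0 *
      ((g : Matrix (Fin 2) (Fin 2) (ZMod p)) 0 0)⁻¹ with ht
    refine ⟨some t, ?_⟩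
    show ((((lt p t)⁻¹ * g : SL2 p)) : Matrix (Fin 2) (Fin 2) (ZMod p)) 1 0 = 0
    rw [lt_inv, Matrix.SpecialLinearGroup.coe_mul, Matrix.mul_apply, Fin.sum_univ_two]
    have e0 : ((lt p (-t)) : Matrix (Fin 2) (Fin 2) (ZMod p)) 1 0 = -t := rfl
    have e1 : ((lt p (-t)) : Matrix (Fin 2) (Fin 2) (ZMod p)) 1 1 = 1 := rfl
    rw [e0, e1, ht, one_mul, neg_mul, mul_assoc, inv_mul_cancel₀ h, mul_one]
    ring

/-- the spanning family of `Ind`. -/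
def fam : Option (ZMod p) → Ind p F 0 := fun o =>
  Submodule.Quotient.mk ((MonoidAlgebra.of F (SL2 p) (reps p o)) ⊗ₜ[F]
    (show S p F 0 from (1 : F)))

lemma mk_of_mem_span (g : SL2 p) :
    (Submodule.Quotient.mk ((MonoidAlgebra.of F (SL2 p) g) ⊗ₜ[F]
        (show S p F 0 from (1 : F))) : Ind p F 0)
      ∈ Submodule.span F (Set.range (fam p F)) := by
  obtain ⟨o, ho⟩ := decomp p g
  set b : UT p := ⟨(reps p o)⁻¹ * g, ho⟩ with hb
  have hg : reps p o * (b : SL2 p) = g := mul_inv_cancel_left _ _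
  have hrel : (MonoidAlgebra.of F (SL2 p) g) ⊗ₜ[F] (show S p F 0 from (1 : F)) -
      (MonoidAlgebra.of F (SL2 p) (reps p o)) ⊗ₜ[F] (show S p F 0 from (1 : F))
      ∈ indRel p F 0 := by
    have hmem : (MonoidAlgebra.of F (SL2 p) (b : SL2 p)) ⊗ₜ[F] (show S p F 0 from (1 : F)) -
        (1 : MonoidAlgebra F (SL2 p)) ⊗ₜ[F]
          ((MonoidAlgebra.of F (UT p) b) • (show S p F 0 from (1 : F)))
        ∈ indRelSet p F 0 := ⟨b, _, rfl⟩
    have hsm := Submodule.smul_mem (indRel p F 0)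
      (MonoidAlgebra.of F (SL2 p) (reps p o)) (Submodule.subset_span hmem)
    rw [smul_sub, TensorProduct.smul_tmul', TensorProduct.smul_tmul', of_smul_S,
      smul_eq_mul, smul_eq_mul, mul_one, ← _root_.map_mul, hg] at hsm
    exact hsm
  have hmk : (Submodule.Quotient.mk ((MonoidAlgebra.of F (SL2 p) g) ⊗ₜ[F]
      (show S p F 0 from (1 : F))) : Ind p F 0) = fam p F o :=
    (Submodule.Quotient.eq _).mpr hrel
  rw [hmk]
  exact Submodule.subset_span ⟨o, rfl⟩

lemma span_fam : Submodule.span F (Set.range (fam p F)) = ⊤ := by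
  rw [eq_top_iff]
  intro x _
  obtain ⟨z, rfl⟩ := Submodule.Quotient.mk_surjective _ x
  induction z using TensorProduct.induction_on with
  | zero =>
    rw [Submodule.Quotient.mk_zero]
    exact Submodule.zero_mem _
  | add x y hx hy =>
    rw [Submodule.Quotient.mk_add]
    exact Submodule.add_mem _ (hx Submodule.mem_top) (hy Submodule.mem_top)
  | tmul a s =>
    induction a using MonoidAlgebra.induction_linear with
    | zero =>
      rw [TensorProduct.zero_tmul, Submodule.Quotient.mk_zero]
      exact Submodule.zero_mem _
    | add f g hf hg =>
      rw [TensorProduct.add_tmul, Submodule.Quotient.mk_add]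
      exact Submodule.add_mem _ (hf Submodule.mem_top) (hg Submodule.mem_top)
    | single g c =>
      have hsingle : (MonoidAlgebra.single g c : MonoidAlgebra F (SL2 p))
          = c • (MonoidAlgebra.of F (SL2 p) g) := by
        rw [show MonoidAlgebra.of F (SL2 p) g = MonoidAlgebra.single g 1 from rfl,
          MonoidAlgebra.smul_single, smul_eq_mul, mul_one]
      have hs : s = (show F from s) • (show S p F 0 from (1 : F)) :=
        (mul_one (show F from s)).symm
      rw [hsingle, ← TensorProduct.smul_tmul', Submodule.Quotient.mk_smul]
      apply Submodule.smul_mem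
      rw [hs, TensorProduct.tmul_smul, Submodule.Quotient.mk_smul]
      exact Submodule.smul_of_tower_mem _ _ (mk_of_mem_span p F g)

instance : Module.Finite F (Ind p F 0) :=
  ⟨by rw [← span_fam p F]; exact Submodule.fg_span (Set.finite_range _)⟩

lemma finrank_Ind_le : Module.finrank F (Ind p F 0) ≤ p + 1 := by
  classical
  have hrange : LinearMap.range (Fintype.linearCombination F (fam p F)) = ⊤ := by
    rw [Fintype.range_linearCombination, span_fam p F]
  have hle := LinearMap.finrank_range_le (Fintype.linearCombination F (fam p F))
  rw [hrange, finrank_top] at hle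
  apply le_trans hle
  rw [Module.finrank_pi]
  simp [ZMod.card]

instance (t : ℕ) : Module.Finite F (V p F t) :=
  inferInstanceAs (Module.Finite F (homogeneousSubmodule (Fin 2) F (t - 1)))

end FinrankInd


end Aux14

end Aux14

/-- `Ind_B^G(S_0) ≅ V_1 ⊕ V_p`: the induction of the trivial `F[B]`-module is the direct
sum of the trivial module and the Steinberg module. -/
theorem stmt14 (p : ℕ) (hp : p.Prime) (hodd : Odd p)
    (F : Type) [Field F] [IsAlgClosed F] [CharP F p] :
    Nonempty (Ind p F 0 ≃ₗ[MonoidAlgebra F (SL2 p)] (V p F 1 × V p F p)) := by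
  haveI : Fact p.Prime := ⟨hp⟩
  have hsurjPhi : Function.Surjective (Aux14.Phi p F) := by
    intro y
    obtain ⟨z, hz⟩ := Aux14.muMap_surjective p F y
    exact ⟨Submodule.Quotient.mk z, hz⟩
  have hP : Module.finrank F (V p F 1 × V p F p) = p + 1 := by
    rw [Module.finrank_prod]
    have h1 : Module.finrank F (V p F 1) = 0 + 1 := Aux14.finrank_hsub 0
    have h2 : Module.finrank F (V p F p) = (p - 1) + 1 := Aux14.finrank_hsub (p - 1)
    rw [h1, h2]
    have := hp.two_le
    omega
  have hfr : Module.finrank F (Ind p F 0) = Module.finrank F (V p F 1 × V p F p) := by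
    have hle1 := Aux14.finrank_Ind_le p F
    set Phi' := LinearMap.restrictScalars F (Aux14.Phi p F) with hPhi'
    have hsurj' : Function.Surjective Phi' := by
      rw [hPhi']
      exact hsurjPhi
    have hrange : LinearMap.range Phi' = ⊤ := LinearMap.range_eq_top.mpr hsurj'
    have hle2 := LinearMap.finrank_range_le Phi'
    rw [hrange, finrank_top] at hle2
    omega
  have hinj' : Function.Injective (LinearMap.restrictScalars F (Aux14.Phi p F)) := by
    apply (LinearMap.injective_iff_surjective_of_finrank_eq_finrank hfr).mpr
    exact hsurjPhi
  exact ⟨LinearEquiv.ofBijective (Aux14.Phi p F) ⟨hinj', hsurjPhi⟩⟩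
end

section
/- Let p be an odd prime and n = (p-1)/2. Define n×n matrices over ℚ, indexed by {1,...,n}: ℬ with entries ℬ_{ii} = 2 for i < n, ℬ_{nn} = 3, ℬ_{ij} = 1 if |i-j| = 1, and ℬ_{ij} = 0 otherwise; and Γ with entries Γ_{ij} = (-1)^{i+j}·(min(i,j) − 2ij/p). Then ℬ·Γ = I, i.e., Γ is the inverse of ℬ. -/
private lemma sum_pick {n : ℕ} (g : Fin n → ℚ) (m : ℕ) :
    (∑ k : Fin n, if (k : ℕ) = m then g k else 0) =
      if h : m < n then g ⟨m, h⟩ else 0 := by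
  split_ifs with h
  · rw [Finset.sum_eq_single (⟨m, h⟩ : Fin n)]
    · simp
    · intro c _ hc
      exact if_neg fun hx => hc (Fin.ext hx)
    · intro hm; exact absurd (Finset.mem_univ _) hm
  · exact Finset.sum_eq_zero fun k _ => if_neg (by have := k.isLt; omega)

private lemma sum_pick' {n : ℕ} (g : Fin n → ℚ) (m : ℕ) :
    (∑ k : Fin n, if (k : ℕ) + 1 = m then g k else 0) =
      if h : m - 1 < n ∧ 1 ≤ m then g ⟨m - 1, h.1⟩ else 0 := by
  split_ifs with h
  · rw [Finset.sum_eq_single (⟨m - 1, h.1⟩ : Fin n)]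
    · rw [if_pos (by show m - 1 + 1 = m; omega)]
    · intro c _ hc
      refine if_neg fun hx => hc (Fin.ext ?_)
      show (c : ℕ) = m - 1
      omega
    · intro hm; exact absurd (Finset.mem_univ _) hm
  · refine Finset.sum_eq_zero fun k _ => if_neg fun hx => ?_
    have := k.isLt; omega

/-- The matrix `Γ` with `Γ_{ij} = (-1)^{i+j}(min(i,j) − 2ij/p)` is the inverse of the
Cartan matrix `ℬ` (tridiagonal with diagonal `2, ..., 2, 3` and off-diagonal `1`) of each
non-semisimple block of `F[SL₂(𝔽_p)]`, where both are `n×n` matrices, `n = (p-1)/2`,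
indexed by `{1, ..., n}`. -/
theorem stmt17 (p : ℕ) (hp : p.Prime) (hodd : Odd p) (n : ℕ) (hn : n = (p - 1) / 2)
    (B Γ : Matrix (Fin n) (Fin n) ℚ)
    (hB : ∀ i j : Fin n, B i j =
      if i = j then (if (i : ℕ) + 1 = n then 3 else 2)
      else if (i : ℕ) + 1 + 1 = (j : ℕ) + 1 ∨ (j : ℕ) + 1 + 1 = (i : ℕ) + 1 then 1 else 0)
    (hΓ : ∀ i j : Fin n, Γ i j =
      (-1 : ℚ) ^ (((i : ℕ) + 1) + ((j : ℕ) + 1)) *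
        (min (((i : ℕ) : ℚ) + 1) (((j : ℕ) : ℚ) + 1) -
          2 * (((i : ℕ) : ℚ) + 1) * (((j : ℕ) : ℚ) + 1) / (p : ℚ))) :
    B * Γ = 1 := by
  have h2 : 2 ≤ p := hp.two_le
  obtain ⟨m, hm⟩ := hodd
  have hpn : p = 2 * n + 1 := by omega
  have hpQ : (p : ℚ) ≠ 0 := Nat.cast_ne_zero.mpr (by omega)
  have hpQ' : (p : ℚ) = 2 * n + 1 := by rw [hpn]; push_cast; ring
  ext i j
  rw [Matrix.mul_apply, Matrix.one_apply]
  have hsum : ∀ k : Fin n, B i k * Γ k j =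
      (if (k : ℕ) = (i : ℕ) then (if (i : ℕ) + 1 = n then (3:ℚ) else 2) * Γ k j else 0)
      + ((if (k : ℕ) = (i : ℕ) + 1 then Γ k j else 0)
      + (if (k : ℕ) + 1 = (i : ℕ) then Γ k j else 0)) := by
    intro k
    rw [hB]; simp only [Fin.ext_iff]
    split_ifs <;> first | ring1 | (exfalso; omega)
  rw [Finset.sum_congr rfl fun k _ => hsum k, Finset.sum_add_distrib,
    Finset.sum_add_distrib, sum_pick, sum_pick, sum_pick', dif_pos i.isLt]
  -- endgame
  clear hsum hB hm h2 hn hp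
  obtain ⟨a, ha⟩ := i
  obtain ⟨b, hb⟩ := j
  simp only [hΓ, Fin.mk.injEq, Fin.val_mk]
  have powsimp : ∀ c : ℕ, (-1:ℚ) ^ (2 * c) = 1 := fun c => by
    rw [pow_mul]; norm_num
  have powsimp' : ∀ c : ℕ, (-1:ℚ) ^ (2 * c + 1) = -1 := fun c => by
    rw [pow_succ, powsimp]; norm_num
  by_cases hL : 1 ≤ a
  · obtain ⟨a', rfl⟩ : ∃ a', a = a' + 1 := ⟨a - 1, by omega⟩
    by_cases hR : a' + 1 + 1 = n
    · -- last row (with left neighbor)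
      rw [if_pos hR, dif_neg (by omega), dif_pos (show a' + 1 - 1 < n ∧ 1 ≤ a' + 1 by omega)]
      try simp only [Nat.add_sub_cancel, Fin.val_mk]
      have hnQ : (n : ℚ) = (a' : ℚ) + 2 := by exact_mod_cast congrArg (Nat.cast : ℕ → ℚ) hR.symm
      rw [hpQ', hnQ]
      rcases Nat.lt_trichotomy b (a' + 1) with hc | hc | hc
      · rw [if_neg (by omega)]
        have hcQ : (b : ℚ) ≤ (a' : ℚ) := by exact_mod_cast (by omega : b ≤ a')
        push_cast
        rw [min_eq_right (by linarith : ((b:ℚ) + 1) ≤ (a':ℚ) + 1 + 1),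
            min_eq_right (by linarith : ((b:ℚ) + 1) ≤ (a':ℚ) + 1)]
        rw [show a' + 1 + 1 + (b + 1) = (a' + b) + 3 by ring,
            show a' + 1 + (b + 1) = (a' + b) + 2 by ring, pow_add, pow_add]
        field_simp
        ring
      · subst hc
        rw [if_pos rfl]
        push_cast
        rw [min_self, min_eq_left (by linarith : ((a':ℚ) + 1) ≤ (a':ℚ) + 1 + 1)]
        rw [show a' + 1 + 1 + (a' + 1 + 1) = 2 * (a' + 2) by ring,
            show a' + 1 + (a' + 1 + 1) = 2 * (a' + 1) + 1 by ring, powsimp, powsimp']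
        field_simp
        ring
      · exact absurd hc (by omega)
    · -- interior row (both neighbors)
      rw [if_neg hR, dif_pos (show a' + 1 + 1 < n by omega),
          dif_pos (show a' + 1 - 1 < n ∧ 1 ≤ a' + 1 by omega)]
      try simp only [Nat.add_sub_cancel, Fin.val_mk]
      rcases Nat.lt_trichotomy b (a' + 1) with hc | hc | hc
      · rw [if_neg (by omega)]
        have hcQ : (b : ℚ) ≤ (a' : ℚ) := by exact_mod_cast (by omega : b ≤ a')
        push_cast
        rw [min_eq_right (by linarith : ((b:ℚ) + 1) ≤ (a':ℚ) + 1 + 1),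
            min_eq_right (by linarith : ((b:ℚ) + 1) ≤ (a':ℚ) + 1 + 1 + 1),
            min_eq_right (by linarith : ((b:ℚ) + 1) ≤ (a':ℚ) + 1)]
        rw [show a' + 1 + 1 + (b + 1) = (a' + b) + 3 by ring,
            show a' + 1 + 1 + 1 + (b + 1) = (a' + b) + 4 by ring,
            show a' + 1 + (b + 1) = (a' + b) + 2 by ring, pow_add, pow_add, pow_add]
        field_simp
        ring
      · subst hc
        rw [if_pos rfl]
        push_cast
        rw [min_self, min_eq_left (by linarith : ((a':ℚ) + 1) ≤ (a':ℚ) + 1 + 1),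
            min_eq_right (by linarith : ((a':ℚ) + 1 + 1) ≤ (a':ℚ) + 1 + 1 + 1)]
        rw [show a' + 1 + 1 + (a' + 1 + 1) = 2 * (a' + 2) by ring,
            show a' + 1 + (a' + 1 + 1) = 2 * (a' + 1) + 1 by ring,
            show a' + 1 + 1 + 1 + (a' + 1 + 1) = 2 * (a' + 2) + 1 by ring,
            powsimp, powsimp', powsimp']
        field_simp
        ring
      · -- b > a
        rw [if_neg (by omega)]
        have hcQ : (a' : ℚ) + 2 ≤ (b : ℚ) := by exact_mod_cast (by omega : a' + 2 ≤ b)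
        push_cast
        rw [min_eq_left (by linarith : ((a':ℚ) + 1 + 1) ≤ (b:ℚ) + 1),
            min_eq_left (by linarith : ((a':ℚ) + 1 + 1 + 1) ≤ (b:ℚ) + 1),
            min_eq_left (by linarith : ((a':ℚ) + 1) ≤ (b:ℚ) + 1)]
        rw [show a' + 1 + 1 + (b + 1) = (a' + b) + 3 by ring,
            show a' + 1 + 1 + 1 + (b + 1) = (a' + b) + 4 by ring,
            show a' + 1 + (b + 1) = (a' + b) + 2 by ring, pow_add, pow_add, pow_add]
        field_simp
        ring
  · have ha0 : a = 0 := by omega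
    subst ha0
    by_cases hR : 0 + 1 = n
    · -- n = 1
      rw [if_pos hR, dif_neg (by omega), dif_neg (by omega)]
      have hb0 : b = 0 := by omega
      subst hb0
      rw [if_pos rfl, min_self]
      rw [hpQ', show (n:ℚ) = 1 from by exact_mod_cast hR.symm]
      norm_num
    · -- first row with right neighbor
      rw [if_neg hR, dif_pos (show 0 + 1 < n by omega), dif_neg (by omega)]
      try simp only [Fin.val_mk]
      rcases Nat.lt_trichotomy b 0 with hc | hc | hc
      · exact absurd hc (by omega)
      · subst hc
        rw [if_pos rfl]
        push_cast
        rw [min_eq_right (by norm_num : ((0:ℚ) + 1) ≤ (1:ℚ) + 1)]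
        field_simp
        rw [min_self]
        ring
      · rw [if_neg (by omega)]
        have hcQ : (1 : ℚ) ≤ (b : ℚ) := by exact_mod_cast hc
        push_cast
        rw [min_eq_left (by linarith : ((1:ℚ) + 1) ≤ (b:ℚ) + 1)]
        rw [show 1 + (b + 1) = b + 2 by ring,
            show 2 + (b + 1) = b + 3 by ring, pow_add, pow_add]
        field_simp
        rw [min_eq_left (by linarith : (0:ℚ) + 1 ≤ (b:ℚ) + 1)]
        ring
end
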